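/- arXiv:1312.2081 — 6 statements merged into one kernel-verified Lean document; each statement's English description precedes it below -/
import Mathlib

section
/- For integers n ≥ 2 and m ≥ 2n+1, define α = (m-1)/(n-1), β = ⌈α⌉, γ = β²/(β+1), and t(n,m) = (n-1)·β + 1 if α ≤ γ, and t(n,m) = ⌊(m-1)/β⌋ + m if α > γ. Then t(n,m) equals the least integer t such that t cannot be written as a sum of (one or more) integers each lying in the interval [t-m+1, n-1]. -/
private lemma exists_list_aux (a b : ℤ) : ∀ (k : ℕ), 1 ≤ k → ∀ s : ℤ,
    (k : ℤ) * a ≤ s → s ≤ (k : ℤ) * b →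
    ∃ l : List ℤ, l.length = k ∧ (∀ x ∈ l, a ≤ x ∧ x ≤ b) ∧ l.sum = s := by
  intro k
  induction k with
  | zero => omega
  | succ k ih =>
    intro _ s h1 h2
    rcases Nat.eq_zero_or_pos k with hk | hk
    · subst hk
      refine ⟨[s], rfl, ?_, by simp⟩
      intro x hx
      simp only [List.mem_singleton] at hx
      subst hx
      push_cast at h1 h2
      constructor <;> linarith
    · have hkz : (0:ℤ) < (k:ℤ) + 1 := by positivity
      push_cast at h1 h2
      have hab : a ≤ b := by
        have : ((k:ℤ)+1) * a ≤ ((k:ℤ)+1) * b := le_trans h1 h2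
        exact le_of_mul_le_mul_left this hkz
      set x : ℤ := max a (s - (k:ℤ) * b) with hx
      have hx1 : a ≤ x := le_max_left _ _
      have hx2 : x ≤ b := by
        apply max_le hab
        nlinarith
      have hge : (k:ℤ) * a ≤ s - x := by
        rcases max_choice a (s - (k:ℤ) * b) with h | h
        · rw [hx, h]; nlinarith
        · rw [hx, h]
          have : (k:ℤ) * a ≤ (k:ℤ) * b := by
            apply mul_le_mul_of_nonneg_left hab (by positivity)
          linarith
      have hle : s - x ≤ (k:ℤ) * b := by
        have : s - (k:ℤ) * b ≤ x := le_max_right _ _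
        linarith
      obtain ⟨l, hlen, hmem, hsum⟩ := ih hk (s - x) hge hle
      refine ⟨x :: l, by simp [hlen], ?_, by rw [List.sum_cons, hsum]; ring⟩
      intro y hy
      rcases List.mem_cons.mp hy with h | h
      · subst h; exact ⟨hx1, hx2⟩
      · exact hmem y h

private lemma sum_bound (a b : ℤ) : ∀ l : List ℤ, (∀ x ∈ l, a ≤ x ∧ x ≤ b) →
    (l.length : ℤ) * a ≤ l.sum ∧ l.sum ≤ (l.length : ℤ) * b := by
  intro l
  induction l with
  | nil => simp
  | cons x l ih =>
    intro h
    obtain ⟨hx1, hx2⟩ := h x (List.mem_cons_self)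
    obtain ⟨h1, h2⟩ := ih (fun y hy => h y (List.mem_cons_of_mem x hy))
    simp only [List.sum_cons, List.length_cons]
    push_cast
    constructor <;> nlinarith

private lemma repr_of (n m t k : ℤ) (hk : 1 ≤ k) (h1 : k * (t - m + 1) ≤ t)
    (h2 : t ≤ k * (n - 1)) :
    ∃ l : List ℤ, l ≠ [] ∧ (∀ x ∈ l, t - m + 1 ≤ x ∧ x ≤ n - 1) ∧ l.sum = t := by
  have hkt : ((k.toNat : ℤ)) = k := Int.toNat_of_nonneg (by omega)
  obtain ⟨l, hlen, hmem, hsum⟩ := exists_list_aux (t - m + 1) (n - 1) k.toNat (by omega) t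
    (by rwa [hkt]) (by rwa [hkt])
  refine ⟨l, ?_, hmem, hsum⟩
  intro hnil
  rw [hnil] at hlen
  simp at hlen
  omega

set_option maxHeartbeats 1000000 in
/-- t(n,m) is the least integer t that cannot be written as a sum of
one or more integers each lying in the interval [t-m+1, n-1]. -/
theorem stmt0 (n m : ℤ) (hn : 2 ≤ n) (hm : 2 * n + 1 ≤ m) :
    IsLeast {t : ℤ | ¬ ∃ l : List ℤ,
        l ≠ [] ∧ (∀ x ∈ l, t - m + 1 ≤ x ∧ x ≤ n - 1) ∧ l.sum = t}
      (let α : ℚ := ((m : ℚ) - 1) / ((n : ℚ) - 1)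
       let β : ℤ := ⌈α⌉
       if α ≤ (β : ℚ) ^ 2 / ((β : ℚ) + 1) then (n - 1) * β + 1 else (m - 1) / β + m) := by
  have hdQ : (0:ℚ) < (n:ℚ) - 1 := by
    have : (2:ℚ) ≤ (n:ℚ) := by exact_mod_cast hn
    linarith
  show IsLeast _
      (if ((m : ℚ) - 1) / ((n : ℚ) - 1) ≤
          ((⌈((m : ℚ) - 1) / ((n : ℚ) - 1)⌉ : ℤ) : ℚ) ^ 2 /
            (((⌈((m : ℚ) - 1) / ((n : ℚ) - 1)⌉ : ℤ) : ℚ) + 1)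
        then (n - 1) * ⌈((m : ℚ) - 1) / ((n : ℚ) - 1)⌉ + 1
        else (m - 1) / ⌈((m : ℚ) - 1) / ((n : ℚ) - 1)⌉ + m)
  set α : ℚ := ((m : ℚ) - 1) / ((n : ℚ) - 1) with hαdef
  set β : ℤ := ⌈α⌉ with hβdef
  -- basic bounds on β
  have hub : m - 1 ≤ β * (n - 1) := by
    have h := Int.le_ceil α
    rw [← hβdef] at h
    rw [hαdef, div_le_iff₀ hdQ] at h
    exact_mod_cast h
  have hlb : (β - 1) * (n - 1) < m - 1 := by
    have h : (β : ℚ) - 1 < α := by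
      have := Int.ceil_lt_add_one α
      rw [← hβdef] at this
      linarith
    rw [hαdef, lt_div_iff₀ hdQ] at h
    exact_mod_cast h
  have hβ3 : 3 ≤ β := by
    by_contra hcon
    push_neg at hcon
    have : β * (n - 1) ≤ 2 * (n - 1) :=
      mul_le_mul_of_nonneg_right (by omega) (by omega)
    omega
  -- r ∈ [0, n-2]
  have hr0 : 0 ≤ β * (n - 1) - (m - 1) := by omega
  have hr1 : β * (n - 1) - (m - 1) ≤ n - 2 := by nlinarith [hlb]
  have hβQ : (0:ℚ) < (β : ℚ) + 1 := by
    have : (3:ℚ) ≤ (β:ℚ) := by exact_mod_cast hβ3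
    linarith
  by_cases hC : α ≤ (β : ℚ) ^ 2 / ((β : ℚ) + 1)
  · rw [if_pos hC, mul_comm (n - 1) β]
    -- Case A : β*(n-1) ≤ r*(β+1)
    have hCZ : (m - 1) * (β + 1) ≤ β ^ 2 * (n - 1) := by
      rw [hαdef, div_le_div_iff₀ hdQ hβQ] at hC
      exact_mod_cast hC
    have hA : β * (n - 1) ≤ (β * (n - 1) - (m - 1)) * (β + 1) := by nlinarith [hCZ]
    constructor
    · -- membership
      rintro ⟨l, hne, hmem, hsum⟩
      have hk1 : 0 < l.length := List.length_pos_iff.mpr hne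
      obtain ⟨hlo, hhi⟩ := sum_bound _ _ l hmem
      rw [hsum] at hlo hhi
      set k : ℤ := (l.length : ℤ) with hkdef
      have hk1' : 1 ≤ k := by rw [hkdef]; exact_mod_cast hk1
      have hkβ : β + 1 ≤ k := by nlinarith [hhi]
      have hprod : (β + 1) * (β * (n - 1) + 1 - m + 1) ≤ k * (β * (n - 1) + 1 - m + 1) :=
        mul_le_mul_of_nonneg_right hkβ (by omega)
      nlinarith [hlo, hprod, hA]
    · -- lower bound
      intro t ht
      by_contra hlt
      push_neg at hlt
      apply ht
      rcases le_or_gt t (m - 1) with hcase | hcase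
      · rcases le_or_gt t (n - 1) with h1 | h1
        · exact repr_of n m t 1 le_rfl (by omega) (by omega)
        · refine repr_of n m t t (by omega) ?_ ?_
          · nlinarith
          · nlinarith
      · -- m ≤ t ≤ β*(n-1)
        have htub : t ≤ β * (n - 1) := by omega
        refine repr_of n m t β (by omega) ?_ htub
        have h1 : (β - 1) * (t - m + 1) ≤ (β - 1) * (β * (n - 1) - (m - 1) + 1) :=
          mul_le_mul_of_nonneg_left (by omega) (by omega)
        have h2 : β * (β * (n - 1) - (m - 1) + 1) ≤ β * (n - 1) :=
          mul_le_mul_of_nonneg_left (by omega) (by omega)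
        nlinarith [h1, h2]
  · rw [if_neg hC]
    -- Case B : r*(β+1) < β*(n-1)
    push_neg at hC
    have hCZ : β ^ 2 * (n - 1) < (m - 1) * (β + 1) := by
      rw [hαdef, div_lt_div_iff₀ hβQ hdQ] at hC
      exact_mod_cast hC
    have hB : (β * (n - 1) - (m - 1)) * (β + 1) < β * (n - 1) := by nlinarith [hCZ]
    set q : ℤ := (m - 1) / β with hqdef
    have hβpos : (0:ℤ) < β := by omega
    have hdm : β * q + (m - 1) % β = m - 1 := Int.mul_ediv_add_emod (m - 1) β
    have hρ0 : 0 ≤ (m - 1) % β := Int.emod_nonneg _ (by omega)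
    have hρ1 : (m - 1) % β < β := Int.emod_lt_of_pos _ hβpos
    have hqr : β * (n - 1) - (m - 1) ≤ q := by
      rw [hqdef]
      rw [Int.le_ediv_iff_mul_le hβpos]
      nlinarith [hB]
    have hqd : q ≤ n - 1 := by
      have : β * q ≤ β * (n - 1) := by omega
      exact le_of_mul_le_mul_left this hβpos
    constructor
    · -- membership
      rintro ⟨l, hne, hmem, hsum⟩
      have hk1 : 0 < l.length := List.length_pos_iff.mpr hne
      obtain ⟨hlo, hhi⟩ := sum_bound _ _ l hmem
      rw [hsum] at hlo hhi
      set k : ℤ := (l.length : ℤ) with hkdef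
      have hk1' : 1 ≤ k := by rw [hkdef]; exact_mod_cast hk1
      have ht0 : β * (n - 1) < q + m := by omega
      have hkβ : β + 1 ≤ k := by nlinarith [hhi]
      have hprod : (β + 1) * (q + m - m + 1) ≤ k * (q + m - m + 1) :=
        mul_le_mul_of_nonneg_right hkβ (by omega)
      nlinarith [hlo, hprod]
    · -- lower bound
      intro t ht
      by_contra hlt
      push_neg at hlt
      apply ht
      rcases le_or_gt t (m - 1) with hcase | hcase
      · rcases le_or_gt t (n - 1) with h1 | h1
        · exact repr_of n m t 1 le_rfl (by omega) (by omega)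
        · refine repr_of n m t t (by omega) ?_ ?_
          · nlinarith
          · nlinarith
      · rcases le_or_gt t (β * (n - 1)) with htub | htub
        · refine repr_of n m t β (by omega) ?_ htub
          have h1 : (β - 1) * (t - m + 1) ≤ (β - 1) * (β * (n - 1) - (m - 1) + 1) :=
            mul_le_mul_of_nonneg_left (by omega) (by omega)
          have h2 : β * (β * (n - 1) - (m - 1) + 1) ≤ β * (n - 1) :=
            mul_le_mul_of_nonneg_left (by omega) (by omega)
          nlinarith [h1, h2]
        · -- β*(n-1) < t ≤ q + m - 1, use k = β + 1
          refine repr_of n m t (β + 1) (by omega) ?_ ?_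
          · have h1 : β * (t - m + 1) ≤ β * q :=
              mul_le_mul_of_nonneg_left (by omega) (by omega)
            nlinarith [h1]
          · nlinarith [hqd, hub]
end

section
/- Let n ≥ 2, m ≥ 2n+1, α = (m-1)/(n-1), β = ⌈α⌉. Then the set T of integers t such that t ∈ L([t-m+1, n-1]) has maximum element max{(n-1)·β, ⌊(m-1)/β⌋ + m - 1}. -/
/-- the set T = {t : t ∈ L([t-m+1, n-1])} has maximum element
max{(n-1)·β, ⌊(m-1)/β⌋ + m - 1}, where β = ⌈(m-1)/(n-1)⌉. -/
theorem stmt1 (n m : ℤ) (hn : 2 ≤ n) (hm : 2 * n + 1 ≤ m) :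
    IsGreatest {t : ℤ | ∃ l : List ℤ,
        (∀ x ∈ l, t - m + 1 ≤ x ∧ x ≤ n - 1) ∧ l.sum = t}
      (max ((n - 1) * ⌈((m : ℚ) - 1) / ((n : ℚ) - 1)⌉)
        ((m - 1) / ⌈((m : ℚ) - 1) / ((n : ℚ) - 1)⌉ + m - 1)) := by
  set β : ℤ := ⌈((m : ℚ) - 1) / ((n : ℚ) - 1)⌉ with hβ
  have hnq : (0:ℚ) < (n:ℚ) - 1 := by
    have : (2:ℚ) ≤ (n:ℚ) := by exact_mod_cast hn
    linarith
  have hB1 : m - 1 ≤ β * (n - 1) := by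
    have h := Int.le_ceil (((m:ℚ) - 1) / ((n:ℚ) - 1))
    rw [div_le_iff₀ hnq] at h
    have h2 : ((m:ℚ) - 1) ≤ (β:ℚ) * ((n:ℚ) - 1) := h
    exact_mod_cast h2
  have hB2 : (β - 1) * (n - 1) ≤ m - 1 := by
    have h := Int.ceil_lt_add_one (((m:ℚ) - 1) / ((n:ℚ) - 1))
    have h2 : ((β:ℚ) - 1) < ((m:ℚ) - 1) / ((n:ℚ) - 1) := by
      rw [← hβ] at h; linarith
    rw [lt_div_iff₀ hnq] at h2
    have h3 : ((β:ℚ) - 1) * ((n:ℚ) - 1) ≤ (m:ℚ) - 1 := le_of_lt h2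
    exact_mod_cast h3
  have hB3 : 2 ≤ β := by
    have h1 : (2:ℚ) < ((m:ℚ) - 1) / ((n:ℚ) - 1) := by
      rw [lt_div_iff₀ hnq]
      have : (2*n + 1 : ℚ) ≤ (m:ℚ) := by exact_mod_cast hm
      linarith
    have h2 : (2:ℚ) < (β:ℚ) := lt_of_lt_of_le h1 (Int.le_ceil _)
    have h3 : (2:ℤ) < β := by exact_mod_cast h2
    linarith
  have hβpos : 0 < β := by linarith
  set q : ℤ := (m - 1) / β with hq
  set r : ℤ := (m - 1) % β with hr
  have hr0 : 0 ≤ r := Int.emod_nonneg _ (by linarith)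
  have hr1 : r < β := Int.emod_lt_of_pos _ hβpos
  have hdm : β * q + r = m - 1 := Int.mul_ediv_add_emod (m - 1) β
  have hq0 : 0 ≤ q := Int.ediv_nonneg (by linarith) hβpos.le
  have hqle : q ≤ n - 1 := by
    have h1 : β * q ≤ m - 1 := by linarith
    have h2 : β * q ≤ β * (n - 1) := by linarith
    exact le_of_mul_le_mul_left h2 hβpos
  -- membership of (n-1)*β
  have mem1 : (n - 1) * β ∈ {t : ℤ | ∃ l : List ℤ,
      (∀ x ∈ l, t - m + 1 ≤ x ∧ x ≤ n - 1) ∧ l.sum = t} := by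
    refine ⟨List.replicate β.toNat (n - 1), ?_, ?_⟩
    · intro x hx
      rw [List.eq_of_mem_replicate hx]
      constructor
      · nlinarith [hB2]
      · exact le_refl _
    · rw [List.sum_replicate, nsmul_eq_mul, Int.toNat_of_nonneg hβpos.le]
      ring
  -- membership of q + m - 1
  have hq1 : 1 ≤ r → q + 1 ≤ n - 1 := by
    intro h
    by_contra hc
    push_neg at hc
    have hge : n - 1 ≤ q := by linarith
    have : β * (n - 1) ≤ β * q := mul_le_mul_of_nonneg_left hge hβpos.le
    linarith
  have mem2 : q + m - 1 ∈ {t : ℤ | ∃ l : List ℤ,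
      (∀ x ∈ l, t - m + 1 ≤ x ∧ x ≤ n - 1) ∧ l.sum = t} := by
    refine ⟨List.replicate r.toNat (q + 1) ++ List.replicate (β - r).toNat q ++ [q], ?_, ?_⟩
    · intro x hx
      simp only [List.mem_append, List.mem_replicate, List.mem_singleton] at hx
      rcases hx with (⟨hne, hx⟩ | ⟨_, hx⟩) | hx
      · subst hx
        have hr' : 1 ≤ r := by
          rcases lt_or_ge 0 r with h | h
          · linarith
          · exfalso; apply hne; omega
        constructor
        · linarith
        · exact hq1 hr'
      · subst hx; constructor <;> linarith
      · subst hx; constructor <;> linarith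
    · rw [List.sum_append, List.sum_append, List.sum_replicate, List.sum_replicate,
        List.sum_singleton, nsmul_eq_mul, nsmul_eq_mul, Int.toNat_of_nonneg hr0,
        Int.toNat_of_nonneg (by linarith : (0:ℤ) ≤ β - r)]
      nlinarith [hdm]
  constructor
  · rcases le_total ((n - 1) * β) (q + m - 1) with h | h
    · rw [max_eq_right h]; exact mem2
    · rw [max_eq_left h]; exact mem1
  · rintro t ⟨l, hl, hsum⟩
    have hub1 : l.sum ≤ l.length • (n - 1) :=
      List.sum_le_card_nsmul l _ (fun x hx => (hl x hx).2)
    have hub2 : l.length • (t - m + 1) ≤ l.sum :=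
      List.card_nsmul_le_sum l _ (fun x hx => (hl x hx).1)
    rw [nsmul_eq_mul] at hub1 hub2
    set k : ℤ := (l.length : ℤ) with hk
    have hk0 : 0 ≤ k := by positivity
    rcases eq_or_lt_of_le hk0 with h0 | h1
    · -- empty list
      have hlen : l.length = 0 := by rw [hk] at h0; exact_mod_cast h0.symm
      rw [List.length_eq_zero_iff] at hlen
      subst hlen
      simp at hsum
      subst hsum
      refine le_trans ?_ (le_max_right _ _)
      linarith
    · have hk1 : 1 ≤ k := h1
      by_cases hkβ : k ≤ β
      · refine le_trans ?_ (le_max_left _ _)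
        nlinarith [hub1, hsum]
      · push_neg at hkβ
        have hkβ' : β + 1 ≤ k := hkβ
        by_cases ht : t ≤ m - 1
        · refine le_trans ?_ (le_max_right _ _)
          linarith
        · push_neg at ht
          have key : (k - 1) * (t - (m - 1)) ≤ m - 1 := by nlinarith [hub2, hsum]
          have key2 : β * (t - (m - 1)) ≤ m - 1 := by nlinarith
          have key3 : t - (m - 1) ≤ q := by
            rw [hq, Int.le_ediv_iff_mul_le hβpos]
            nlinarith
          refine le_trans ?_ (le_max_right _ _)
          linarith
end

section
/- Let G be a finite simple graph on at least three vertices with δ(G) ≥ ⌊n/2⌋ and G connected. Then G contains a path with at least min{|V(G)|, n} vertices. -/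
open SimpleGraph

namespace SimpleGraph.Walk

variable {V : Type*} {G : SimpleGraph V}

lemma exists_split' {a b : V} (p : G.Walk a b) : ∀ i ≤ p.length,
    ∃ (q : G.Walk a (p.getVert i)) (r : G.Walk (p.getVert i) b),
      p = q.append r ∧ q.length = i := by
  induction p with
  | nil =>
    intro i hi
    simp only [length_nil, Nat.le_zero] at hi
    subst hi
    rw [getVert_zero]
    exact ⟨.nil, .nil, by simp, rfl⟩
  | cons h q' ih =>
    intro i hi
    cases i with
    | zero =>
      rw [getVert_zero]
      exact ⟨.nil, .cons h q', by simp, rfl⟩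
    | succ i =>
      rw [getVert_cons_succ]
      obtain ⟨q1, r, hqr, hl⟩ := ih i (by simpa using hi)
      exact ⟨.cons h q1, r, by simp [← hqr], by simp [hl]⟩

lemma length_rotate' [DecidableEq V] {a x : V} (c : G.Walk a a) (h : x ∈ c.support) :
    (c.rotate x h).length = c.length := by
  rw [rotate, length_append, add_comm, ← length_append, take_spec]

end SimpleGraph.Walk


/-- if G is connected on ≥ 3 vertices with δ(G) ≥ ⌊n/2⌋, then G
contains a path on at least min{|V(G)|, n} vertices. -/
theorem stmt3 {V : Type*} [Fintype V] (G : SimpleGraph V) (n : ℕ) (hn : 1 ≤ n)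
    (hcard : 3 ≤ Fintype.card V) (hconn : G.Connected)
    (hdeg : ∀ v : V, n / 2 ≤ (G.neighborSet v).ncard) :
    ∃ (u v : V) (w : G.Walk u v), w.IsPath ∧ min (Fintype.card V) n ≤ w.length + 1 := by
  classical
  have hne : Nonempty V := Fintype.card_pos_iff.mp (by omega)
  obtain ⟨v0⟩ := hne
  -- the set of lengths of paths
  set S : Finset ℕ := (Finset.range (Fintype.card V)).filter
    (fun k => ∃ (a b : V) (p : G.Walk a b), p.IsPath ∧ p.length = k) with hSdef
  have hS0 : 0 ∈ S := by
    simp only [hSdef, Finset.mem_filter, Finset.mem_range]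
    exact ⟨by omega, v0, v0, Walk.nil, Walk.IsPath.nil, rfl⟩
  set k := S.max' ⟨0, hS0⟩ with hkdef
  have hkS : k ∈ S := S.max'_mem _
  simp only [hSdef, Finset.mem_filter, Finset.mem_range] at hkS
  obtain ⟨hkV', a, b, p, hp, hpk⟩ := hkS
  have hmax : ∀ (c d : V) (w : G.Walk c d), w.IsPath → w.length ≤ k := by
    intro c d w hw
    apply Finset.le_max'
    simp only [hSdef, Finset.mem_filter, Finset.mem_range]
    exact ⟨hw.length_lt, c, d, w, hw, rfl⟩
  -- neighbors of the start of a maximal path are on its support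
  have hnbr : ∀ (c d : V) (w : G.Walk c d), w.IsPath → w.length = k →
      ∀ z, G.Adj c z → z ∈ w.support := by
    intro c d w hw hwk z hz
    by_contra hzs
    have hpath : (Walk.cons hz.symm w).IsPath := (Walk.cons_isPath_iff _ _).2 ⟨hw, hzs⟩
    have := hmax _ _ _ hpath
    simp only [Walk.length_cons, hwk] at this
    omega
  by_cases hlong : min (Fintype.card V) n ≤ k + 1
  · exact ⟨a, b, p, hp, by rw [hpk]; exact hlong⟩
  exfalso
  push_neg at hlong
  have hkV : k + 1 < Fintype.card V := lt_of_lt_of_le hlong (min_le_left _ _)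
  have hkn : k + 1 < n := lt_of_lt_of_le hlong (min_le_right _ _)
  -- pigeonhole: crossing pair
  set A : Finset ℕ := (Finset.range k).filter (fun i => G.Adj a (p.getVert (i+1))) with hAdef
  set B : Finset ℕ := (Finset.range k).filter (fun i => G.Adj b (p.getVert i)) with hBdef
  have hA : n / 2 ≤ A.card := by
    have hsub : G.neighborSet a ⊆ ((A.image (fun i => p.getVert (i+1)) : Finset V) : Set V) := by
      intro w hw
      have hwadj : G.Adj a w := hw
      have hws : w ∈ p.support := hnbr a b p hp hpk w hwadj
      obtain ⟨j, hj1, hj2⟩ := Walk.mem_support_iff_exists_getVert.mp hws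
      have hj0 : j ≠ 0 := by
        intro h; subst h; rw [Walk.getVert_zero] at hj1; exact G.ne_of_adj hwadj hj1
      simp only [Finset.coe_image, Set.mem_image, Finset.mem_coe, hAdef,
        Finset.mem_filter, Finset.mem_range]
      refine ⟨j - 1, ⟨by omega, ?_⟩, ?_⟩
      · rw [Nat.sub_add_cancel (by omega), hj1]; exact hwadj
      · rw [Nat.sub_add_cancel (by omega), hj1]
    calc n / 2 ≤ (G.neighborSet a).ncard := hdeg a
      _ ≤ ((A.image (fun i => p.getVert (i+1)) : Finset V) : Set V).ncard :=
          Set.ncard_le_ncard hsub (Finset.finite_toSet _)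
      _ = (A.image (fun i => p.getVert (i+1))).card := Set.ncard_coe_finset _
      _ ≤ A.card := Finset.card_image_le
  have hB : n / 2 ≤ B.card := by
    have hsub : G.neighborSet b ⊆ ((B.image (fun i => p.getVert i) : Finset V) : Set V) := by
      intro w hw
      have hwadj : G.Adj b w := hw
      have hws : w ∈ p.support := by
        have := hnbr b a p.reverse hp.reverse (by simpa using hpk) w hwadj
        simpa [Walk.support_reverse] using this
      obtain ⟨j, hj1, hj2⟩ := Walk.mem_support_iff_exists_getVert.mp hws
      have hjk : j ≠ k := by
        intro h; subst h
        have : p.getVert p.length = b := p.getVert_length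
        rw [hpk] at this
        rw [this] at hj1
        exact G.ne_of_adj hwadj hj1
      simp only [Finset.coe_image, Set.mem_image, Finset.mem_coe, hBdef,
        Finset.mem_filter, Finset.mem_range]
      refine ⟨j, ⟨by omega, ?_⟩, hj1⟩
      rw [hj1]; exact hwadj
    calc n / 2 ≤ (G.neighborSet b).ncard := hdeg b
      _ ≤ ((B.image (fun i => p.getVert i) : Finset V) : Set V).ncard :=
          Set.ncard_le_ncard hsub (Finset.finite_toSet _)
      _ = (B.image (fun i => p.getVert i)).card := Set.ncard_coe_finset _
      _ ≤ B.card := Finset.card_image_le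
  have hABne : (A ∩ B).Nonempty := by
    rw [← Finset.card_pos]
    have hsub : A ∪ B ⊆ Finset.range k := by
      apply Finset.union_subset <;> exact Finset.filter_subset _ _
    have h1 := Finset.card_union_add_card_inter A B
    have h2 : (A ∪ B).card ≤ k := le_trans (Finset.card_le_card hsub) (by simp)
    omega
  obtain ⟨i, hiAB⟩ := hABne
  rw [Finset.mem_inter, hAdef, hBdef] at hiAB
  simp only [Finset.mem_filter, Finset.mem_range] at hiAB
  obtain ⟨⟨hik, hia⟩, -, hib⟩ := hiAB
  -- split p at index i
  obtain ⟨q, r, hqr, hql⟩ := Walk.exists_split' p i (by omega)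
  have hlen := congrArg Walk.length hqr
  rw [Walk.length_append] at hlen
  have hrlen : r.length = k - i := by omega
  have hrnil : ¬ r.Nil := by rw [Walk.not_nil_iff_lt_length]; omega
  have h1 : p.getVert (i+1) = r.getVert 1 := by
    conv_lhs => rw [hqr]
    rw [Walk.getVert_append, hql, if_neg (by omega)]
    congr 1
    omega
  set st : G.Walk (p.getVert (i+1)) b := (r.tail).copy h1.symm rfl with hstdef
  have hstsupp : st.support = r.support.tail := by
    rw [hstdef, Walk.support_copy, Walk.support_tail_of_not_nil r hrnil]
  have hstlen : st.length = k - i - 1 := by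
    have := Walk.length_tail_add_one hrnil
    rw [hstdef, Walk.length_copy]
    omega
  set c : G.Walk a a := q.append (Walk.cons hib.symm (st.reverse.append hia.symm.toWalk))
    with hcdef
  have hclen : c.length = k + 1 := by
    simp only [hcdef, Walk.length_append, Walk.length_cons, Walk.length_reverse,
      SimpleGraph.Adj.toWalk, Walk.length_nil]
    omega
  have hcsupp : c.support = q.support ++ (st.support.reverse ++ [a]) := by
    simp [hcdef, Walk.support_append, Walk.support_cons, Walk.support_reverse,
      SimpleGraph.Adj.toWalk]
  have hpsupp : p.support = q.support ++ st.support := by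
    conv_lhs => rw [hqr]
    rw [Walk.support_append, hstsupp]
  have hperm : c.support.tail.Perm p.support := by
    rw [hcsupp, hpsupp, Walk.support_eq_cons q]
    simp only [List.cons_append, List.tail_cons]
    rw [← Multiset.coe_eq_coe]
    simp only [← Multiset.coe_add, ← Multiset.cons_coe, Multiset.coe_reverse]
    simp only [Multiset.coe_nil, Multiset.cons_zero, ← Multiset.singleton_add]
    abel
  have hpnodup := hp.support_nodup
  have hout : ∃ y, y ∉ p.support := by
    by_contra hcon
    push_neg at hcon
    have hsub2 : (Finset.univ : Finset V) ⊆ p.support.toFinset :=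
      fun x _ => List.mem_toFinset.2 (hcon x)
    have hcard2 := Finset.card_le_card hsub2
    rw [List.toFinset_card_of_nodup hpnodup] at hcard2
    have hsl : p.support.length = p.length + 1 := Walk.length_support p
    simp only [Finset.card_univ] at hcard2
    omega
  obtain ⟨y0, hy0⟩ := hout
  obtain ⟨w0⟩ := hconn.preconnected a y0
  obtain ⟨d, hd, hdfst, hdsnd⟩ := w0.exists_boundary_dart {z | z ∈ p.support}
      p.start_mem_support hy0
  have hxy : G.Adj d.fst d.snd := d.adj
  have hxs : d.fst ∈ c.support := by
    rw [Walk.support_eq_cons c]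
    exact List.mem_cons_of_mem _ ((hperm.mem_iff).2 hdfst)
  set c' := c.rotate _ hxs with hc'def
  have hc'len : c'.length = k + 1 := by rw [hc'def, Walk.length_rotate']; exact hclen
  have hc'nil : ¬ c'.Nil := by rw [Walk.not_nil_iff_lt_length]; omega
  have hc'tailsupp : c'.support.tail.Perm p.support :=
    ((Walk.support_rotate c _ hxs).perm).trans hperm
  have hctsupp : c'.tail.support = c'.support.tail := Walk.support_tail_of_not_nil c' hc'nil
  have hctlen : c'.tail.length = k := by
    have := Walk.length_tail_add_one hc'nil
    omega
  have hctperm : c'.tail.support.Perm p.support := hctsupp ▸ hc'tailsupp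
  have hctpath : c'.tail.IsPath := Walk.IsPath.mk' (hctperm.nodup_iff.2 hpnodup)
  have hyct : d.snd ∉ c'.tail.support := fun h => hdsnd (hctperm.mem_iff.1 h)
  have hfinal : (Walk.cons hxy.symm c'.tail.reverse).IsPath := by
    rw [Walk.cons_isPath_iff]
    refine ⟨(Walk.isPath_reverse_iff c'.tail).2 hctpath, ?_⟩
    rw [Walk.support_reverse]
    simpa using hyct
  have hle := hmax _ _ _ hfinal
  rw [Walk.length_cons, Walk.length_reverse] at hle
  omega
end

section
/- Let G be a disconnected finite simple graph such that m ≤ |V(G)| and every connected component of G has at most ⌊m/2⌋ vertices, where m ≥ 3. Then the complement of G contains a cycle with exactly m vertices. -/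
namespace Stmt6Aux

variable {V : Type*} {K : Type*}

lemma sum_toList {α M : Type*} [AddCommMonoid M] (s : Finset α) (f : α → M) :
    (s.toList.map f).sum = ∑ b ∈ s, f b := by
  rw [Finset.sum, ← Multiset.coe_toList s.val, Multiset.map_coe, Multiset.sum_coe]; rfl

/-- Walk following an index function with everywhere-adjacent consecutive values. -/
def walkFrom (G : SimpleGraph V) (f : ℕ → V) (hadj : ∀ j, G.Adj (f j) (f (j+1))) :
    (n : ℕ) → G.Walk (f 0) (f n)
  | 0 => SimpleGraph.Walk.nil
  | n+1 => (walkFrom G f hadj n).concat (hadj n)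

lemma walkFrom_length (G : SimpleGraph V) (f : ℕ → V) (hadj) (n : ℕ) :
    (walkFrom G f hadj n).length = n := by
  induction n with
  | zero => rfl
  | succ n ih => simp [walkFrom, SimpleGraph.Walk.length_concat, ih]

lemma walkFrom_support (G : SimpleGraph V) (f : ℕ → V) (hadj) (n : ℕ) :
    (walkFrom G f hadj n).support = (List.range (n+1)).map f := by
  induction n with
  | zero => rfl
  | succ n ih =>
    simp only [walkFrom, SimpleGraph.Walk.support_concat, ih, List.concat_eq_append,
      List.range_succ (n := n+1), List.map_append]
    rfl

lemma walkFrom_edges (G : SimpleGraph V) (f : ℕ → V) (hadj) (n : ℕ) :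
    (walkFrom G f hadj n).edges = (List.range n).map (fun j => s(f j, f (j+1))) := by
  induction n with
  | zero => rfl
  | succ n ih =>
    simp only [walkFrom, SimpleGraph.Walk.edges_concat, ih, List.concat_eq_append,
      List.range_succ (n := n), List.map_append]
    rfl

/-- Core structural lemma about concatenations of blocks with pairwise-distinct keys. -/
lemma core (kf : V → K) (v0 : V) (bs : List (List V))
    (hkey : ∀ b ∈ bs, ∀ v ∈ b, ∀ w ∈ b, kf v = kf w)
    (hdis : bs.Pairwise (fun b b' => ∀ v ∈ b, ∀ w ∈ b', kf v ≠ kf w)) :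
    ∀ (p q : ℕ), p ≤ q → q < (bs.flatMap id).length →
      kf ((bs.flatMap id).getD p v0) = kf ((bs.flatMap id).getD q v0) →
      ∃ off b, b ∈ bs ∧ off ≤ p ∧ q < off + b.length ∧
        ∀ i, off ≤ i → i < off + b.length →
          kf ((bs.flatMap id).getD i v0) = kf ((bs.flatMap id).getD p v0) := by
  induction bs with
  | nil => intro p q _ hq _; simp at hq
  | cons b rest ih =>
    intro p q hpq hq heq
    have hL : (b :: rest).flatMap id = b ++ rest.flatMap id := by simp
    have hlen : ((b :: rest).flatMap id).length = b.length + (rest.flatMap id).length := by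
      rw [hL, List.length_append]
    by_cases hqb : q < b.length
    · refine ⟨0, b, by simp, Nat.zero_le _, by omega, ?_⟩
      intro i _ hi
      have hgp : ((b :: rest).flatMap id).getD p v0 = b.getD p v0 := by
        rw [hL]; exact List.getD_append _ _ _ _ (by omega)
      have hgi : ((b :: rest).flatMap id).getD i v0 = b.getD i v0 := by
        rw [hL]; exact List.getD_append _ _ _ _ (by omega)
      rw [hgp, hgi, List.getD_eq_getElem _ _ (by omega : i < b.length),
        List.getD_eq_getElem _ _ (by omega : p < b.length)]
      exact hkey b (by simp) _ (List.getElem_mem _) _ (List.getElem_mem _)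
    · have hshift : ∀ x, b.length ≤ x →
          ((b :: rest).flatMap id).getD x v0 = (rest.flatMap id).getD (x - b.length) v0 := by
        intro x hx; rw [hL]; exact List.getD_append_right _ _ _ _ hx
      by_cases hpb : p < b.length
      · exfalso
        have hq' : q - b.length < (rest.flatMap id).length := by omega
        have hgq : ((b :: rest).flatMap id).getD q v0 =
            (rest.flatMap id)[q - b.length]'hq' := by
          rw [hshift q (by omega), List.getD_eq_getElem _ _ hq']
        have hmem : (rest.flatMap id)[q - b.length]'hq' ∈ rest.flatMap id :=
          List.getElem_mem _
        rw [List.mem_flatMap] at hmem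
        obtain ⟨b', hb', hvb'⟩ := hmem
        have hgp : ((b :: rest).flatMap id).getD p v0 = b[p]'hpb := by
          rw [hL, List.getD_append _ _ _ _ hpb, List.getD_eq_getElem _ _ hpb]
        have := (List.pairwise_cons.mp hdis).1 b' hb' (b[p]'hpb) (List.getElem_mem _)
          _ hvb'
        rw [hgp, hgq] at heq
        exact this heq
      · have hq' : q - b.length < (rest.flatMap id).length := by omega
        obtain ⟨off, b', hb', h1, h2, h3⟩ := ih (hkey := fun x hx => hkey x (by simp [hx]))
          (hdis := (List.pairwise_cons.mp hdis).2) (p - b.length) (q - b.length)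
          (by omega) hq' (by rw [← hshift p (by omega), ← hshift q (by omega)]; exact heq)
        refine ⟨b.length + off, b', by simp [hb'], by omega, by omega, ?_⟩
        intro i hi1 hi2
        rw [hshift i (by omega), hshift p (by omega)]
        exact h3 (i - b.length) (by omega) (by omega)

/-- The interleaving index permutation. -/
def sig (m j : ℕ) : ℕ := if j % 2 = 0 then j / 2 else (m+1)/2 + j/2

lemma keystep {K : Type*} (m : ℕ) (hm : 3 ≤ m) (k : ℕ → K)
    (H1 : ∀ p j q : ℕ, p ≤ j → j ≤ q → q < m → k p = k q → k j = k p)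
    (H2 : ∀ p q : ℕ, p ≤ q → q < m → k p = k q → q + 1 - p ≤ m / 2)
    (H3 : ∀ p q : ℕ, p ≤ q → q < m → k p = k q → k p ≠ k 0 → k (q - p) = k 0) :
    ∀ j, j < m → k (sig m j) ≠ k (sig m ((j+1) % m)) := by
  intro j hj hcon
  by_cases hjm : j + 1 < m
  · rw [Nat.mod_eq_of_lt hjm] at hcon
    by_cases hje : j % 2 = 0
    · rw [show sig m j = j / 2 from by rw [sig, if_pos hje],
        show sig m (j+1) = (m+1)/2 + j/2 from by
          rw [sig, if_neg (by omega)]; congr 1; omega] at hcon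
      have := H2 (j/2) ((m+1)/2 + j/2) (by omega) (by omega) hcon
      omega
    · rw [show sig m j = (m+1)/2 + j/2 from by rw [sig, if_neg hje],
        show sig m (j+1) = j/2 + 1 from by rw [sig, if_pos (by omega)]; omega] at hcon
      have hqm : (m+1)/2 + j/2 < m := by omega
      have hx := H2 (j/2+1) ((m+1)/2 + j/2) (by omega) hqm hcon.symm
      by_cases h0 : k (j/2+1) = k 0
      · have h00 : k 0 = k ((m+1)/2 + j/2) := h0.symm.trans hcon.symm
        have := H2 0 ((m+1)/2 + j/2) (Nat.zero_le _) hqm h00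
        omega
      · have h3 := H3 (j/2+1) ((m+1)/2 + j/2) (by omega) hqm hcon.symm h0
        have e2 : (m+1)/2 + j/2 - (j/2+1) = (m+1)/2 - 1 := by omega
        rw [e2] at h3
        have h1 := H1 (j/2+1) ((m+1)/2 - 1) ((m+1)/2 + j/2) (by omega) (by omega)
          hqm hcon.symm
        exact h0 (h1.symm.trans h3)
  · have hj1 : j + 1 = m := by omega
    rw [hj1, Nat.mod_self, show sig m 0 = 0 from by rw [sig]; norm_num] at hcon
    by_cases hje : j % 2 = 0
    · rw [show sig m j = j/2 from by rw [sig, if_pos hje]] at hcon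
      have := H2 0 (j/2) (Nat.zero_le _) (by omega) hcon.symm
      omega
    · rw [show sig m j = (m+1)/2 + j/2 from by rw [sig, if_neg hje]] at hcon
      have := H2 0 ((m+1)/2 + j/2) (Nat.zero_le _) (by omega) hcon.symm
      omega

end Stmt6Aux

/-- G contains a cycle on exactly k vertices. -/
def HasCycleOn {V : Type*} (G : SimpleGraph V) (k : ℕ) : Prop :=
  ∃ (u : V) (w : G.Walk u u), w.IsCycle ∧ w.length = k

/-- if G is disconnected, m ≤ |V(G)|, and every component of G has
at most ⌊m/2⌋ vertices, then the complement of G contains a cycle C_m. -/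
theorem stmt6 {V : Type*} [Fintype V] (G : SimpleGraph V) (m : ℕ) (hm : 3 ≤ m)
    (hdisc : ¬G.Connected) (hcard : m ≤ Fintype.card V)
    (hcomp : ∀ c : G.ConnectedComponent, c.supp.ncard ≤ m / 2) :
    HasCycleOn Gᶜ m := by
  classical
  set key : V → G.ConnectedComponent := G.connectedComponentMk with hkey_def
  obtain ⟨S, -, hScard⟩ := Finset.exists_subset_card_eq
    (show m ≤ (Finset.univ : Finset V).card by simpa using hcard)
  have hSne : S.Nonempty := Finset.card_pos.mp (by omega)
  obtain ⟨v0, hv0⟩ := hSne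
  set cs : Finset G.ConnectedComponent := S.image key with hcs_def
  have hcsne : cs.Nonempty := ⟨key v0, Finset.mem_image_of_mem key hv0⟩
  obtain ⟨c0, hc0cs, hc0max⟩ := Finset.exists_max_image cs
    (fun c => (S.filter (fun v => key v = c)).card) hcsne
  set blk : G.ConnectedComponent → List V :=
    fun c => (S.filter (fun v => key v = c)).toList with hblk_def
  set bs : List (List V) := (c0 :: (cs.erase c0).toList).map blk with hbs_def
  set L : List V := bs.flatMap id with hL_def
  -- basic facts about blocks
  have hkey_mem : ∀ c, ∀ v ∈ blk c, key v = c := by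
    intro c v hv
    rw [hblk_def] at hv
    simp only [Finset.mem_toList, Finset.mem_filter] at hv
    exact hv.2
  have hlen_blk : ∀ c, (blk c).length = (S.filter (fun v => key v = c)).card := by
    intro c; rw [hblk_def]; exact Finset.length_toList _
  have hblk_le : ∀ c, (blk c).length ≤ m / 2 := by
    intro c
    rw [hlen_blk]
    calc (S.filter (fun v => key v = c)).card ≤ c.supp.toFinset.card := by
          apply Finset.card_le_card
          intro v hv
          rw [Set.mem_toFinset, SimpleGraph.ConnectedComponent.mem_supp_iff]
          exact (Finset.mem_filter.mp hv).2
      _ = c.supp.ncard := (Set.ncard_eq_toFinset_card' _).symm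
      _ ≤ m / 2 := hcomp c
  have horder_nodup : (c0 :: (cs.erase c0).toList).Nodup :=
    List.nodup_cons.mpr ⟨by simp [Finset.mem_toList], Finset.nodup_toList _⟩
  have horder_mem : ∀ c ∈ (c0 :: (cs.erase c0).toList), c ∈ cs := by
    intro c hc
    rcases List.mem_cons.mp hc with h | h
    · exact h ▸ hc0cs
    · exact Finset.mem_of_mem_erase (Finset.mem_toList.mp h)
  have hbs_mem : ∀ b ∈ bs, ∃ c ∈ cs, blk c = b := by
    intro b hb
    rw [hbs_def, List.mem_map] at hb
    obtain ⟨c, hc, rfl⟩ := hb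
    exact ⟨c, horder_mem c hc, rfl⟩
  have hkeyB : ∀ b ∈ bs, ∀ v ∈ b, ∀ w ∈ b, key v = key w := by
    intro b hb v hv w hw
    obtain ⟨c, -, rfl⟩ := hbs_mem b hb
    rw [hkey_mem c v hv, hkey_mem c w hw]
  have hdis : bs.Pairwise (fun b b' => ∀ v ∈ b, ∀ w ∈ b', key v ≠ key w) := by
    rw [hbs_def, List.pairwise_map]
    refine List.Pairwise.imp ?_ horder_nodup
    intro c c' hne v hv w hw heq
    exact hne (by rw [← hkey_mem c v hv, ← hkey_mem c' w hw, heq])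
  have hLlen : L.length = m := by
    rw [hL_def, List.length_flatMap, hbs_def, List.map_map, List.map_cons, List.sum_cons,
      Stmt6Aux.sum_toList]
    simp only [Function.comp, id_eq]
    rw [hlen_blk]
    simp_rw [hlen_blk]
    rw [Finset.add_sum_erase _ (fun c => (Finset.filter (fun v => key v = c) S).card) hc0cs,
      hcs_def, ← Finset.card_eq_sum_card_image, hScard]
  have hLnodup : L.Nodup := by
    rw [hL_def, List.nodup_flatMap]
    constructor
    · intro b hb
      obtain ⟨c, -, rfl⟩ := hbs_mem b hb
      rw [hblk_def]; exact Finset.nodup_toList _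
    · rw [hbs_def, List.pairwise_map]
      refine List.Pairwise.imp ?_ horder_nodup
      intro c c' hne
      intro v hv hv'
      exact hne (by rw [← hkey_mem c v hv, ← hkey_mem c' v hv'])
  have hmem0 : ∀ i, i < (blk c0).length →
      key (L.getD i v0) = key (L.getD 0 v0) := by
    intro i hi
    have hi0 : 0 < (blk c0).length := by omega
    have hsplit : L = blk c0 ++ ((cs.erase c0).toList.map blk).flatMap id := by
      rw [hL_def, hbs_def]; simp
    rw [hsplit, List.getD_append _ _ _ _ hi, List.getD_append _ _ _ _ hi0,
      List.getD_eq_getElem _ _ hi, List.getD_eq_getElem _ _ hi0,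
      hkey_mem c0 _ (List.getElem_mem _), hkey_mem c0 _ (List.getElem_mem _)]
  have hcore := Stmt6Aux.core key v0 bs hkeyB hdis
  rw [← hL_def] at hcore
  have H1 : ∀ p j q : ℕ, p ≤ j → j ≤ q → q < m →
      key (L.getD p v0) = key (L.getD q v0) →
      key (L.getD j v0) = key (L.getD p v0) := by
    intro p j q h1 h2 h3 he
    obtain ⟨off, b, hb, ho1, ho2, ho3⟩ := hcore p q (h1.trans h2)
      (by rw [hLlen]; exact h3) he
    exact ho3 j (by omega) (by omega)
  have H2 : ∀ p q : ℕ, p ≤ q → q < m →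
      key (L.getD p v0) = key (L.getD q v0) → q + 1 - p ≤ m / 2 := by
    intro p q hpq hq he
    obtain ⟨off, b, hb, h1, h2, -⟩ := hcore p q hpq (by rw [hLlen]; exact hq) he
    obtain ⟨c, -, rfl⟩ := hbs_mem b hb
    have := hblk_le c
    omega
  have H3 : ∀ p q : ℕ, p ≤ q → q < m →
      key (L.getD p v0) = key (L.getD q v0) →
      key (L.getD p v0) ≠ key (L.getD 0 v0) →
      key (L.getD (q - p) v0) = key (L.getD 0 v0) := by
    intro p q hpq hq he hne
    obtain ⟨off, b, hb, h1, h2, -⟩ := hcore p q hpq (by rw [hLlen]; exact hq) he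
    obtain ⟨c, hc, rfl⟩ := hbs_mem b hb
    have hbc0 : (blk c).length ≤ (blk c0).length := by
      rw [hlen_blk, hlen_blk]; exact hc0max c hc
    exact hmem0 (q - p) (by omega)
  have hks := Stmt6Aux.keystep m hm (fun i => key (L.getD i v0)) H1 H2 H3
  have hm0 : 0 < m := by omega
  set f : ℕ → V := fun j => L.getD (Stmt6Aux.sig m (j % m)) v0 with hf_def
  have hsig_lt : ∀ j, j < m → Stmt6Aux.sig m j < m := by
    intro j hj; rw [Stmt6Aux.sig]; split_ifs <;> omega
  have hsig_inj : ∀ a b, a < m → b < m →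
      Stmt6Aux.sig m a = Stmt6Aux.sig m b → a = b := by
    intro a b ha hb
    simp only [Stmt6Aux.sig]
    split_ifs <;> omega
  have hfinj : ∀ a b, a < m → b < m → f a = f b → a = b := by
    intro a b ha hb he
    rw [hf_def] at he
    simp only at he
    rw [Nat.mod_eq_of_lt ha, Nat.mod_eq_of_lt hb,
      List.getD_eq_getElem _ _ (by rw [hLlen]; exact hsig_lt a ha),
      List.getD_eq_getElem _ _ (by rw [hLlen]; exact hsig_lt b hb)] at he
    exact hsig_inj a b ha hb ((hLnodup.getElem_inj_iff).mp he)
  have hfmod : ∀ x, f x = f (x % m) := by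
    intro x
    rw [hf_def]
    simp only
    rw [Nat.mod_mod_of_dvd x (dvd_refl m)]
  have hone : (1 : ℕ) % m = 1 := Nat.mod_eq_of_lt (by omega)
  have hadjall : ∀ j, Gᶜ.Adj (f j) (f (j+1)) := by
    intro j
    have hjm : j % m < m := Nat.mod_lt _ hm0
    have hs : (j+1) % m = (j % m + 1) % m := by
      conv_lhs => rw [Nat.add_mod, hone]
    have hne := hks (j % m) hjm
    rw [← hs] at hne
    rw [SimpleGraph.compl_adj]
    constructor
    · intro hcontra
      rw [hf_def] at hcontra
      simp only at hcontra
      exact hne (congrArg key hcontra)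
    · intro hadj
      apply hne
      have hreach := SimpleGraph.ConnectedComponent.sound hadj.reachable
      rw [hf_def] at hreach
      simp only at hreach
      rw [hkey_def]
      exact hreach
  have hfm0 : f m = f 0 := by
    rw [hf_def]
    simp only
    rw [Nat.mod_self, Nat.zero_mod]
  have hmodite : ∀ x : ℕ, x < m → (x+1) % m = if x + 1 = m then 0 else x + 1 := by
    intro x hx
    split_ifs with h
    · rw [h, Nat.mod_self]
    · exact Nat.mod_eq_of_lt (by omega)
  refine ⟨f 0, (Stmt6Aux.walkFrom Gᶜ f hadjall m).copy rfl hfm0, ?_, ?_⟩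
  swap
  · rw [SimpleGraph.Walk.length_copy, Stmt6Aux.walkFrom_length]
  refine SimpleGraph.Walk.IsCycle.mk
    (SimpleGraph.Walk.IsCircuit.mk (SimpleGraph.Walk.IsTrail.mk ?_) ?_) ?_
  · -- edges nodup
    rw [SimpleGraph.Walk.edges_copy, Stmt6Aux.walkFrom_edges]
    refine List.Nodup.map_on ?_ (List.nodup_range (n := m))
    intro a ha b hb he
    rw [List.mem_range] at ha hb
    rcases Sym2.eq_iff.mp he with ⟨h1, h2⟩ | ⟨h1, h2⟩
    · exact hfinj a b ha hb h1
    · have e1 : a = (b+1) % m := by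
        apply hfinj a ((b+1) % m) ha (Nat.mod_lt _ hm0)
        rw [← hfmod]; exact h1
      have e2 : (a+1) % m = b := by
        apply hfinj _ b (Nat.mod_lt _ hm0) hb
        rw [← hfmod]; exact h2
      rw [hmodite b hb] at e1
      rw [hmodite a ha] at e2
      split_ifs at e1 e2 <;> omega
  · -- walk is nonempty
    intro hnil
    have hlen := congrArg SimpleGraph.Walk.length hnil
    rw [SimpleGraph.Walk.length_copy, Stmt6Aux.walkFrom_length] at hlen
    simp at hlen
    omega
  · -- support tail nodup
    rw [SimpleGraph.Walk.support_copy, Stmt6Aux.walkFrom_support, List.range_succ_eq_map,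
      List.map_cons, List.tail_cons, List.map_map]
    refine List.Nodup.map_on ?_ (List.nodup_range (n := m))
    intro a ha b hb he
    rw [List.mem_range] at ha hb
    simp only [Function.comp] at he
    have e1 : (a+1) % m = (b+1) % m := by
      apply hfinj _ _ (Nat.mod_lt _ hm0) (Nat.mod_lt _ hm0)
      rw [← hfmod, ← hfmod]; exact he
    rw [hmodite a ha, hmodite b hb] at e1
    split_ifs at e1 <;> omega
end

section
/- Let G be a finite simple graph, X an independent set in G with |X| ≥ 3, and R = G - X. Suppose every connected component of R has at most one neighbor in X (i.e., every component is joined to at most one vertex of X), the complement of R contains a path on p ≥ 2 vertices, and 3 ≤ m ≤ min{|V(G)|, p + 2|X| - 3}. Then the complement of G contains a cycle on exactly m vertices. -/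
/-- G contains a path on exactly k vertices. -/
def HasPathOn {V : Type*} (G : SimpleGraph V) (k : ℕ) : Prop :=
  ∃ (u v : V) (w : G.Walk u v), w.IsPath ∧ w.length + 1 = k

namespace Stmt12Aux
open SimpleGraph List

variable {V : Type*} {G : SimpleGraph V} {X : Set V}

def mkWalk (G : SimpleGraph V) : ∀ (a : V) (l : List V) (b : V),
    List.Chain G.Adj a (l ++ [b]) → G.Walk a b
  | _, [], _, h => Walk.cons (List.rel_of_isChain_cons_cons h) Walk.nil
  | a, c :: l, b, h =>
      Walk.cons (List.chain_cons.mp h).1 (mkWalk G c l b (List.chain_cons.mp h).2)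

theorem support_mkWalk : ∀ (a : V) (l : List V) (b : V) (h),
    (mkWalk G a l b h).support = a :: (l ++ [b])
  | _, [], _, _ => rfl
  | a, c :: l, b, h => by
      simp only [mkWalk, Walk.support_cons, support_mkWalk c l b _, List.cons_append]
      exact congrArg (a :: ·) (support_mkWalk c l b _)

theorem length_mkWalk : ∀ (a : V) (l : List V) (b : V) (h),
    (mkWalk G a l b h).length = l.length + 1
  | _, [], _, _ => rfl
  | a, c :: l, b, h => by
      simp only [mkWalk, Walk.length_cons, length_mkWalk c l b _, List.length_cons]
      exact congrArg (· + 1) (length_mkWalk c l b _)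

theorem length_eq_one_of_closing {x y : V} (q : G.Walk x y) (hq : q.support.Nodup)
    (he : s(y, x) ∈ q.edges) : q.length = 1 := by
  induction q with
  | nil => simp at he
  | @cons u v w h q ih =>
    rw [Walk.edges_cons, List.mem_cons] at he
    rw [Walk.support_cons, List.nodup_cons] at hq
    rcases he with he | he
    · rcases Sym2.eq_iff.mp he with ⟨_, h2⟩ | ⟨h1, _⟩
      · exact absurd h2 h.ne
      · subst h1
        cases q with
        | nil => rfl
        | cons h' q' =>
          exfalso
          have hmem := q'.end_mem_support
          have hnd := hq.2
          rw [Walk.support_cons, List.nodup_cons] at hnd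
          exact hnd.1 hmem
    · exact absurd (Walk.snd_mem_support_of_mem_edges q he) hq.1

theorem hasCycleOn_of_chain (G : SimpleGraph V) (a : V) (l : List V) (h2 : 2 ≤ l.length)
    (hnd : (a :: l).Nodup) (hch : List.Chain G.Adj a (l ++ [a])) :
    HasCycleOn G (l.length + 1) := by
  obtain ⟨c, l', rfl⟩ : ∃ c l', l = c :: l' := by
    cases l with
    | nil => simp at h2
    | cons c l' => exact ⟨c, l', rfl⟩
  · rw [List.cons_append] at hch
    replace hch : List.IsChain G.Adj (a :: c :: (l' ++ [a])) := hch
    rw [List.isChain_cons_cons] at hch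
    have hadj : G.Adj a c := hch.1
    set w' := mkWalk G c l' a hch.2 with hw'
    have hsup : w'.support = c :: (l' ++ [a]) := support_mkWalk c l' a _
    have hlen : w'.length = l'.length + 1 := length_mkWalk c l' a _
    have hnd' : w'.support.Nodup := by
      rw [hsup]
      simp only [List.nodup_cons, List.mem_cons, List.nodup_append, List.mem_append,
        List.nodup_singleton, List.mem_singleton, List.disjoint_singleton] at hnd ⊢
      refine ⟨?_, hnd.2.2, by simp, ?_⟩
      · rintro (h | h | h)
        · exact hnd.2.1 h
        · exact hnd.1 (Or.inl h.symm)
        · simp at h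
      · rintro x hx y (rfl | h) rfl
        · exact hnd.1 (Or.inr hx)
        · simp at h
    have hpath : w'.IsPath := Walk.IsPath.mk' hnd'
    have hne : s(a, c) ∉ w'.edges := by
      intro hmem
      have h1 := length_eq_one_of_closing w' hnd' hmem
      rw [hlen] at h1
      have h2' : 2 ≤ l'.length + 1 := by simpa using h2
      omega
    refine ⟨a, Walk.cons hadj w', ?_, ?_⟩
    · exact (Walk.cons_isCycle_iff w' hadj).mpr ⟨hpath, hne⟩
    · simp [hlen]

theorem hasCycleOn_of_chain2 (G : SimpleGraph V) (l : List V) (h3 : 3 ≤ l.length)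
    (hnd : l.Nodup) (hch : l.Chain' G.Adj) {a b : V}
    (hh : l.head? = some a) (hl : l.getLast? = some b) (hba : G.Adj b a) :
    HasCycleOn G l.length := by
  obtain ⟨l', rfl⟩ : ∃ l', l = a :: l' := by
    cases l with
    | nil => simp at hh
    | cons c l' =>
      have : c = a := by simpa using hh
      exact ⟨l', by rw [this]⟩
  have h2 : 2 ≤ l'.length := by
    simp only [List.length_cons] at h3
    omega
  have hch2 : List.Chain G.Adj a (l' ++ [a]) := by
    have happ : List.IsChain G.Adj ((a :: l') ++ [a]) := by
      rw [List.isChain_append]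
      refine ⟨hch, List.isChain_singleton _, ?_⟩
      intro x hx y hy
      simp only [List.head?_cons, Option.mem_some_iff] at hy
      rw [hl] at hx
      simp only [Option.mem_some_iff] at hx
      subst hx; subst hy
      exact hba
    exact happ
  have hres := hasCycleOn_of_chain G a l' h2 hnd hch2
  simpa using hres

variable [DecidableEq V]

theorem chain'_of_clique (hadj : ∀ ⦃a b : V⦄, a ∈ X → b ∈ X → a ≠ b → G.Adj a b) :
    ∀ (l : List V), l.Nodup → (∀ z ∈ l, z ∈ X) → l.Chain' G.Adj
  | [], _, _ => List.isChain_nil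
  | [_], _, _ => List.isChain_singleton _
  | x :: y :: l, hnd, hmem => by
    show List.IsChain G.Adj (x :: y :: l)
    rw [List.isChain_cons_cons]
    have hxy : x ≠ y := fun h => (List.nodup_cons.mp hnd).1 (h ▸ List.mem_cons_self (a := y) (l := l))
    exact ⟨hadj (hmem x (by simp)) (hmem y (by simp)) hxy,
      chain'_of_clique hadj (y :: l) (List.nodup_cons.mp hnd).2
        (fun z hz => hmem z (List.mem_cons_of_mem _ hz))⟩

theorem alt_select (G : SimpleGraph V) (X : Set V) (N : V → Finset V)
    (hXX : ∀ ⦃a b : V⦄, a ∈ X → b ∈ X → a ≠ b → G.Adj a b)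
    (hXR : ∀ ⦃x w : V⦄, x ∈ X → w ∉ X → x ∉ N w → G.Adj x w)
    (hNcard : ∀ ⦃w : V⦄, w ∉ X → (N w).card ≤ 1) :
    ∀ (ws : List V) (Y : Finset V) (F1 : Finset V),
      (∀ w ∈ ws, w ∉ X) → ws.Nodup → (∀ z ∈ Y, z ∈ X) →
      ws.length + 3 ≤ Y.card → F1.card ≤ 1 → ∀ (F2 : Finset V), F2.card ≤ 1 →
      ∃ T : List V, T.Nodup ∧ T.Chain' G.Adj ∧ T.length = Y.card + ws.length ∧
        (∀ z ∈ T, z ∈ Y ∨ z ∈ ws) ∧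
        (∃ a, T.head? = some a ∧ a ∈ Y ∧ a ∉ F1) ∧
        (∃ b, T.getLast? = some b ∧ b ∈ Y ∧ b ∉ F2)
  | [], Y, F1, _, _, hYX, hcard, hF1, F2, hF2 => by
    simp only [List.length_nil, zero_add] at hcard
    have hb : (Y \ F2).Nonempty := by
      rw [← Finset.card_pos]
      have := Finset.le_card_sdiff F2 Y
      omega
    obtain ⟨b, hbmem⟩ := hb
    obtain ⟨hbY, hbF2⟩ := Finset.mem_sdiff.mp hbmem
    have ha : ((Y.erase b) \ F1).Nonempty := by
      rw [← Finset.card_pos]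
      have h1 := Finset.le_card_sdiff F1 (Y.erase b)
      have h2 := Finset.card_erase_of_mem hbY
      omega
    obtain ⟨a, hamem⟩ := ha
    obtain ⟨haE, haF1⟩ := Finset.mem_sdiff.mp hamem
    have haY : a ∈ Y := Finset.mem_of_mem_erase haE
    have hab : a ≠ b := Finset.ne_of_mem_erase haE
    set rest := ((Y.erase b).erase a).toList with hrest
    have hrestmem : ∀ z ∈ rest, z ∈ Y ∧ z ≠ a ∧ z ≠ b := by
      intro z hz
      rw [hrest, Finset.mem_toList] at hz
      have h1 := Finset.ne_of_mem_erase hz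
      have h2 := Finset.mem_of_mem_erase hz
      exact ⟨Finset.mem_of_mem_erase h2, h1, Finset.ne_of_mem_erase h2⟩
    refine ⟨a :: (rest ++ [b]), ?_, ?_, ?_, ?_, ?_, ?_⟩
    · rw [List.nodup_cons]
      constructor
      · intro hmem
        rcases List.mem_append.mp hmem with h | h
        · exact (hrestmem a h).2.1 rfl
        · exact hab (List.mem_singleton.mp h)
      · rw [List.nodup_append]
        exact ⟨Finset.nodup_toList _, List.nodup_singleton b,
          fun z hz y hy hzy => (hrestmem z hz).2.2 (hzy.trans (List.mem_singleton.mp hy))⟩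
    · apply chain'_of_clique hXX
      · rw [List.nodup_cons]
        constructor
        · intro hmem
          rcases List.mem_append.mp hmem with h | h
          · exact (hrestmem a h).2.1 rfl
          · exact hab (List.mem_singleton.mp h)
        · rw [List.nodup_append]
          exact ⟨Finset.nodup_toList _, List.nodup_singleton b,
            fun z hz y hy hzy => (hrestmem z hz).2.2 (hzy.trans (List.mem_singleton.mp hy))⟩
      · intro z hz
        rcases List.mem_cons.mp hz with rfl | hz
        · exact hYX _ haY
        · rcases List.mem_append.mp hz with h | h
          · exact hYX _ (hrestmem z h).1
          · exact List.mem_singleton.mp h ▸ hYX _ hbY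
    · have : rest.length = Y.card - 2 := by
        rw [hrest, Finset.length_toList, Finset.card_erase_of_mem haE,
          Finset.card_erase_of_mem hbY]
        omega
      simp only [List.length_cons, List.length_append, List.length_singleton, this,
        List.length_nil]
      omega
    · intro z hz
      left
      rcases List.mem_cons.mp hz with rfl | hz
      · exact haY
      · rcases List.mem_append.mp hz with h | h
        · exact (hrestmem z h).1
        · exact List.mem_singleton.mp h ▸ hbY
    · exact ⟨a, rfl, haY, haF1⟩
    · refine ⟨b, ?_, hbY, hbF2⟩
      rw [show a :: (rest ++ [b]) = (a :: rest) ++ [b] by simp, List.getLast?_concat]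
  | w :: ws', Y, F1, hwsX, hwsnd, hYX, hcard, hF1, F2, hF2 => by
    have hwX : w ∉ X := hwsX w List.mem_cons_self
    have hNw : (N w).card ≤ 1 := hNcard hwX
    simp only [List.length_cons] at hcard
    have hx1 : (Y \ (F1 ∪ N w)).Nonempty := by
      rw [← Finset.card_pos]
      have h1 := Finset.le_card_sdiff (F1 ∪ N w) Y
      have h2 := Finset.card_union_le F1 (N w)
      omega
    obtain ⟨x1, hx1mem⟩ := hx1
    obtain ⟨hx1Y, hx1F⟩ := Finset.mem_sdiff.mp hx1mem
    rw [Finset.mem_union] at hx1F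
    push_neg at hx1F
    have hx1X : x1 ∈ X := hYX _ hx1Y
    obtain ⟨T', hTnd, hTch, hTlen, hTmem, ⟨a, hah, haY, haF⟩, ⟨b, hbl, hbY, hbF⟩⟩ :=
      alt_select G X N hXX hXR hNcard ws' (Y.erase x1) (N w)
        (fun z hz => hwsX z (List.mem_cons_of_mem _ hz))
        (List.nodup_cons.mp hwsnd).2
        (fun z hz => hYX _ (Finset.mem_of_mem_erase hz))
        (by rw [Finset.card_erase_of_mem hx1Y]; omega) hNw F2 hF2
    obtain ⟨t, rfl⟩ : ∃ t, T' = a :: t := by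
      cases T' with
      | nil => simp at hah
      | cons c t =>
        have : c = a := by simpa using hah
        exact ⟨t, by rw [this]⟩
    have haY' : a ∈ Y := Finset.mem_of_mem_erase haY
    refine ⟨x1 :: w :: a :: t, ?_, ?_, ?_, ?_, ?_, ?_⟩
    · rw [List.nodup_cons, List.nodup_cons]
      refine ⟨?_, ?_, hTnd⟩
      · intro hmem
        rcases List.mem_cons.mp hmem with rfl | hmem
        · exact hwX hx1X
        · rcases hTmem _ hmem with h | h
          · exact (Finset.mem_erase.mp h).1 rfl
          · exact hwsX _ (List.mem_cons_of_mem _ h) hx1X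
      · intro hmem
        rcases hTmem _ hmem with h | h
        · exact hwX (hYX _ (Finset.mem_of_mem_erase h))
        · exact (List.nodup_cons.mp hwsnd).1 h
    · show List.IsChain G.Adj (x1 :: w :: a :: t)
      rw [List.isChain_cons_cons, List.isChain_cons_cons]
      exact ⟨hXR hx1X hwX hx1F.2, (hXR (hYX _ haY') hwX haF).symm, hTch⟩
    · have h2 := Finset.card_erase_of_mem hx1Y
      simp only [List.length_cons] at hTlen ⊢
      omega
    · intro z hz
      rcases List.mem_cons.mp hz with rfl | hz
      · exact Or.inl hx1Y
      · rcases List.mem_cons.mp hz with rfl | hz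
        · exact Or.inr List.mem_cons_self
        · rcases hTmem _ hz with h | h
          · exact Or.inl (Finset.mem_of_mem_erase h)
          · exact Or.inr (List.mem_cons_of_mem _ h)
    · exact ⟨x1, rfl, hx1Y, hx1F.1⟩
    · refine ⟨b, ?_, Finset.mem_of_mem_erase hbY, hbF⟩
      rw [List.getLast?_cons_cons, List.getLast?_cons_cons]
      exact hbl

end Stmt12Aux

/-- X an independent set with |X| ≥ 3, R = G - X, every component
of R joined to at most one vertex of X, complement of R has a path on p ≥ 2
vertices, and 3 ≤ m ≤ min{|V(G)|, p + 2|X| - 3}. Then Gᶜ contains a C_m. -/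
theorem stmt12 {V : Type*} [Fintype V] (G : SimpleGraph V) (X : Set V) (p m : ℕ)
    (hind : ∀ x ∈ X, ∀ y ∈ X, ¬G.Adj x y)
    (hX : 3 ≤ X.ncard)
    (hjoin : ∀ c : (G.induce (Xᶜ : Set V)).ConnectedComponent,
      {x ∈ X | ∃ v ∈ c.supp, G.Adj x ↑v}.Subsingleton)
    (hp : 2 ≤ p) (hpath : HasPathOn ((G.induce (Xᶜ : Set V))ᶜ) p)
    (hm3 : 3 ≤ m)
    (hm : (m : ℤ) ≤ min ((Fintype.card V : ℤ)) ((p : ℤ) + 2 * (X.ncard : ℤ) - 3)) :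
    HasCycleOn Gᶜ m := by
  classical
  obtain ⟨hm1, hm2⟩ : m ≤ Fintype.card V ∧ m + 3 ≤ p + 2 * X.ncard := by
    rw [le_min_iff] at hm
    obtain ⟨h1, h2⟩ := hm
    constructor
    · exact_mod_cast h1
    · have h3 : (m : ℤ) + 3 ≤ (p : ℤ) + 2 * (X.ncard : ℤ) := by linarith
      exact_mod_cast h3
  set k := X.ncard with hkdef
  have hXfin : X.Finite := Set.toFinite X
  set XF : Finset V := hXfin.toFinset with hXF
  have hXFmem : ∀ z : V, z ∈ XF ↔ z ∈ X := fun z => Set.Finite.mem_toFinset hXfin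
  have hXFcard : XF.card = k := (Set.ncard_eq_toFinset_card X hXfin).symm
  have hXX : ∀ ⦃a b : V⦄, a ∈ X → b ∈ X → a ≠ b → Gᶜ.Adj a b := by
    intro a b ha hb hne
    rw [SimpleGraph.compl_adj]
    exact ⟨hne, hind a ha b hb⟩
  set N : V → Finset V := fun w => Finset.univ.filter (fun x => x ∈ X ∧ G.Adj x w) with hNdef
  have hNmem : ∀ w x : V, x ∈ N w ↔ x ∈ X ∧ G.Adj x w := by
    intro w x
    rw [hNdef]
    simp
  have hXR : ∀ ⦃x w : V⦄, x ∈ X → w ∉ X → x ∉ N w → Gᶜ.Adj x w := by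
    intro x w hx hw hn
    rw [SimpleGraph.compl_adj]
    exact ⟨fun h => hw (h ▸ hx), fun hadj => hn ((hNmem w x).mpr ⟨hx, hadj⟩)⟩
  have hNcard : ∀ ⦃w : V⦄, w ∉ X → (N w).card ≤ 1 := by
    intro w hw
    rw [Finset.card_le_one]
    intro x hx y hy
    rw [hNmem] at hx hy
    have hwc : w ∈ (Xᶜ : Set V) := hw
    have hsupp : (⟨w, hwc⟩ : (Xᶜ : Set V)) ∈
        ((G.induce (Xᶜ : Set V)).connectedComponentMk ⟨w, hwc⟩).supp := rfl
    exact hjoin ((G.induce (Xᶜ : Set V)).connectedComponentMk ⟨w, hwc⟩)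
      ⟨hx.1, ⟨⟨w, hwc⟩, hsupp, hx.2⟩⟩ ⟨hy.1, ⟨⟨w, hwc⟩, hsupp, hy.2⟩⟩
  -- extract the path in the complement of R
  obtain ⟨u0, v0, w0, hw0, hw0len⟩ := hpath
  set L0 : List V := w0.support.map Subtype.val with hL0
  have hL0len : L0.length = p := by
    rw [hL0, List.length_map, SimpleGraph.Walk.length_support, hw0len]
  have hL0nd : L0.Nodup := List.Nodup.map Subtype.val_injective hw0.support_nodup
  have hL0mem : ∀ z ∈ L0, z ∉ X := by
    intro z hz
    rw [hL0, List.mem_map] at hz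
    obtain ⟨s, _, rfl⟩ := hz
    exact s.2
  have hL0ch : L0.Chain' Gᶜ.Adj := by
    rw [hL0]
    refine List.isChain_map_of_isChain _ ?_ w0.isChain_adj_support
    intro a b hab
    rw [SimpleGraph.compl_adj] at hab ⊢
    refine ⟨fun h => hab.1 (Subtype.val_injective h), fun h => hab.2 ?_⟩
    simpa using h
  have hkpn : k + p ≤ Fintype.card V := by
    have hdisj : Disjoint XF L0.toFinset := by
      rw [Finset.disjoint_left]
      intro z hz hz'
      exact hL0mem z (List.mem_toFinset.mp hz') ((hXFmem z).mp hz)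
    calc k + p = (XF ∪ L0.toFinset).card := by
          rw [Finset.card_union_of_disjoint hdisj, hXFcard,
            List.toFinset_card_of_nodup hL0nd, hL0len]
      _ ≤ _ := Finset.card_le_univ _
  -- the main assembly step
  have HA : ∀ (L ws : List V) (Y : Finset V) (v1 vs : V),
      L.head? = some v1 → L.getLast? = some vs → L.Nodup → L.Chain' Gᶜ.Adj →
      (∀ z ∈ L, z ∉ X) → (∀ z ∈ ws, z ∉ X) → ws.Nodup → (∀ z ∈ ws, z ∉ L) →
      (∀ z ∈ Y, z ∈ X) → ws.length + 3 ≤ Y.card →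
      L.length + Y.card + ws.length = m → HasCycleOn Gᶜ m := by
    intro L ws Y v1 vs hh hl hLnd hLch hLX hwsX hwsnd hwsL hYX hYc hlen
    have hv1L : v1 ∈ L := List.mem_of_mem_head? (by rw [hh]; rfl)
    have hvsL : vs ∈ L := List.mem_of_mem_getLast? (by rw [hl]; rfl)
    have hv1X : v1 ∉ X := hLX _ hv1L
    have hvsX : vs ∉ X := hLX _ hvsL
    obtain ⟨T, hTnd, hTch, hTlen, hTmem, ⟨a, hah, haY, haF⟩, ⟨b, hbl, hbY, hbF⟩⟩ :=
      Stmt12Aux.alt_select Gᶜ X N hXX hXR hNcard ws Y (N vs) hwsX hwsnd hYX hYc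
        (hNcard hvsX) (N v1) (hNcard hv1X)
    have hTne : T ≠ [] := by
      intro h
      rw [h] at hah
      simp at hah
    have hLne : L ≠ [] := by
      intro h
      rw [h] at hh
      simp at hh
    have hCnd : (L ++ T).Nodup := by
      rw [List.nodup_append]
      refine ⟨hLnd, hTnd, fun z hz y hz' hzy => ?_⟩
      subst hzy
      rcases hTmem z hz' with h | h
      · exact hLX z hz (hYX z h)
      · exact hwsL z h hz
    have hCch : (L ++ T).Chain' Gᶜ.Adj := by
      show List.IsChain Gᶜ.Adj (L ++ T)
      rw [List.isChain_append]
      refine ⟨hLch, hTch, ?_⟩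
      intro x hx y hy
      rw [hl, Option.mem_some_iff] at hx
      rw [hah, Option.mem_some_iff] at hy
      subst hx; subst hy
      exact (hXR (hYX a haY) hvsX haF).symm
    have hCh : (L ++ T).head? = some v1 := by
      obtain ⟨c, L', rfl⟩ : ∃ c L', L = c :: L' := by
        cases L with
        | nil => exact absurd rfl hLne
        | cons c L' => exact ⟨c, L', rfl⟩
      simpa using hh
    have hCl : (L ++ T).getLast? = some b := by
      rw [List.getLast?_append_of_ne_nil _ hTne]
      exact hbl
    have hClen : (L ++ T).length = m := by
      rw [List.length_append, hTlen]
      omega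
    have hres := Stmt12Aux.hasCycleOn_of_chain2 Gᶜ (L ++ T) (by omega) hCnd hCch hCh hCl
      (hXR (hYX b hbY) hv1X hbF)
    rwa [hClen] at hres
  have hL0ne : L0 ≠ [] := by
    intro h
    rw [h] at hL0len
    simp at hL0len
    omega
  by_cases hm3e : m = 3
  · -- triangle case
    subst hm3e
    obtain ⟨v1, l0', hcons⟩ := List.exists_cons_of_ne_nil hL0ne
    have hv1X : v1 ∉ X := hL0mem v1 (by rw [hcons]; exact List.mem_cons_self)
    have hpair : 1 < (XF \ N v1).card := by
      have h1 := Finset.le_card_sdiff (N v1) XF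
      have h2 := hNcard hv1X
      omega
    obtain ⟨aa, ha, bb, hb, hab⟩ := Finset.one_lt_card.mp hpair
    obtain ⟨haX, haN⟩ := Finset.mem_sdiff.mp ha
    obtain ⟨hbX, hbN⟩ := Finset.mem_sdiff.mp hb
    have haX' : aa ∈ X := (hXFmem aa).mp haX
    have hbX' : bb ∈ X := (hXFmem bb).mp hbX
    have hch : List.Chain Gᶜ.Adj v1 ([aa, bb] ++ [v1]) := by
      refine List.Chain.cons ((hXR haX' hv1X haN).symm) ?_
      refine List.Chain.cons (hXX haX' hbX' hab) ?_
      exact List.Chain.cons (hXR hbX' hv1X hbN) List.Chain.nil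
    have hnd : (v1 :: [aa, bb]).Nodup := by
      simp only [List.nodup_cons, List.mem_cons, List.not_mem_nil, or_false,
        List.mem_singleton, List.nodup_nil, and_true, List.nodup_singleton]
      refine ⟨?_, ?_⟩
      · rintro (rfl | rfl)
        · exact hv1X haX'
        · exact hv1X hbX'
      · simpa using hab
    have hres := Stmt12Aux.hasCycleOn_of_chain Gᶜ v1 [aa, bb] (by norm_num) hnd hch
    simpa using hres
  · by_cases hcase : m ≤ p + k
    · -- medium case: prefix of path + subset of X
      have hfacts : 1 ≤ m - min k (m - 1) ∧ m - min k (m - 1) ≤ p ∧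
          3 ≤ min k (m - 1) ∧ min k (m - 1) ≤ k ∧
          (m - min k (m - 1)) + min k (m - 1) = m := by omega
      set t := min k (m - 1) with ht
      set s := m - t with hs
      obtain ⟨Y, hYsub, hYcard⟩ := Finset.exists_subset_card_eq (by omega : t ≤ XF.card)
      set L := L0.take s with hL
      have hLlen : L.length = s := by
        rw [hL, List.length_take]
        omega
      have hLne : L ≠ [] := by
        intro h
        rw [h] at hLlen
        simp at hLlen
        omega
      have hLsub := List.take_sublist s L0
      apply HA L [] Y (L.head hLne) (L.getLast hLne) (List.head?_eq_head hLne)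
        (List.getLast?_eq_getLast hLne) (hLsub.nodup hL0nd) (hL0ch.take s)
        (fun z hz => hL0mem z (hLsub.subset hz)) (by simp) List.nodup_nil (by simp)
        (fun z hz => (hXFmem z).mp (hYsub hz)) (by simpa [hYcard] using hfacts.2.2.1)
      simp only [List.length_nil, hYcard, hLlen]
      omega
    · -- long case: whole path + all of X + extra vertices of R
      push_neg at hcase
      have hefacts : 1 ≤ m - p - k ∧ (m - p - k) + 3 ≤ k ∧ p + k + (m - p - k) = m := by omega
      set e := m - p - k with he
      have hsub : L0.toFinset ⊆ XFᶜ := by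
        intro z hz
        rw [Finset.mem_compl]
        intro hzX
        exact hL0mem z (List.mem_toFinset.mp hz) ((hXFmem z).mp hzX)
      have hbig : e ≤ (XFᶜ \ L0.toFinset).card := by
        rw [Finset.card_sdiff_of_subset hsub, Finset.card_compl, hXFcard,
          List.toFinset_card_of_nodup hL0nd, hL0len]
        omega
      obtain ⟨WS, hWSsub, hWScard⟩ := Finset.exists_subset_card_eq hbig
      have hwsmem : ∀ z ∈ WS.toList, z ∉ X ∧ z ∉ L0 := by
        intro z hz
        rw [Finset.mem_toList] at hz
        obtain ⟨h1, h2⟩ := Finset.mem_sdiff.mp (hWSsub hz)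
        rw [Finset.mem_compl, hXFmem] at h1
        rw [List.mem_toFinset] at h2
        exact ⟨h1, h2⟩
      apply HA L0 WS.toList XF (L0.head hL0ne) (L0.getLast hL0ne)
        (List.head?_eq_head hL0ne) (List.getLast?_eq_getLast hL0ne) hL0nd hL0ch
        hL0mem (fun z hz => (hwsmem z hz).1) (Finset.nodup_toList WS)
        (fun z hz => (hwsmem z hz).2) (fun z hz => (hXFmem z).mp hz)
      · rw [Finset.length_toList, hWScard, hXFcard]
        omega
      · rw [Finset.length_toList, hWScard, hXFcard, hL0len]
        omega
end

section
/- For n ≥ 2 and m ≥ 2n+1, let α = (m-1)/(n-1), β = ⌈α⌉, γ = β²/(β+1), and t = (n-1)·β + 1 if α ≤ γ, else t = ⌊(m-1)/β⌋ + m. Then there exists a graph G on t - 1 vertices such that G contains no path on n vertices and the complement of G contains no wheel W_m; consequently R(P_n, W_m) ≥ t. -/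
/-- G contains a wheel W_m: a hub vertex adjacent to all vertices of a cycle C_m. -/
def HasWheel {V : Type*} (G : SimpleGraph V) (m : ℕ) : Prop :=
  ∃ (v u : V) (w : G.Walk u u), w.IsCycle ∧ w.length = m ∧
    ∀ x ∈ w.support, G.Adj v x

/-- The value t(n,m) from the paper. -/
def tval (n m : ℕ) : ℤ :=
  let α : ℚ := ((m : ℚ) - 1) / ((n : ℚ) - 1)
  let β : ℤ := ⌈α⌉
  if α ≤ (β : ℚ) ^ 2 / ((β : ℚ) + 1) then ((n : ℤ) - 1) * β + 1
  else ((m : ℤ) - 1) / β + (m : ℤ)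

/- ### Auxiliary material -/

/-- The fiber index of a vertex: vertices of `Fin N` are split into `k` blocks. -/
def fib (N k : ℕ) (x : Fin N) : ℕ := x.val * k / N

/-- The union of cliques graph: `x ~ y` iff they are distinct and in the same block. -/
def cg (N k : ℕ) : SimpleGraph (Fin N) :=
  SimpleGraph.fromRel (fun x y => fib N k x = fib N k y)

lemma lt_div_succ_mul (a b : ℕ) (hb : 0 < b) : a < (a / b + 1) * b := by
  calc a = b * (a / b) + a % b := (Nat.div_add_mod a b).symm
    _ < b * (a / b) + b := Nat.add_lt_add_left (Nat.mod_lt a hb) _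
    _ = (a / b + 1) * b := by ring

lemma fib_spec {N k : ℕ} (hN : 0 < N) (x : Fin N) :
    fib N k x * N ≤ x.val * k ∧ x.val * k < (fib N k x + 1) * N :=
  ⟨Nat.div_mul_le_self _ _, lt_div_succ_mul _ _ hN⟩

lemma walk_fib_eq {N k : ℕ} {u v : Fin N} (w : (cg N k).Walk u v) :
    ∀ x ∈ w.support, fib N k x = fib N k u := by
  induction w with
  | nil => simp
  | @cons a b c h p ih =>
    intro x hx
    rw [SimpleGraph.Walk.support_cons] at hx
    have hab : fib N k a = fib N k b := by
      have h' := h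
      rw [cg, SimpleGraph.fromRel_adj] at h'
      rcases h'.2 with h2 | h2
      · exact h2
      · exact h2.symm
    rcases List.mem_cons.mp hx with rfl | hx
    · rfl
    · rw [ih x hx, hab]

lemma cg_no_path (N k n : ℕ) (hn : 2 ≤ n) (hA : N ≤ k * (n - 1)) :
    ¬ HasPathOn (cg N k) n := by
  obtain ⟨n', rfl⟩ : ∃ n', n = n' + 2 := ⟨n - 2, by omega⟩
  rintro ⟨u, v, w, hp, hl⟩
  have hN : 0 < N := u.pos
  have hn1 : (n' + 2) - 1 = n' + 1 := rfl
  rw [hn1] at hA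
  set s : Finset ℕ := (w.support.map Fin.val).toFinset with hs
  have hnodup : (w.support.map Fin.val).Nodup :=
    hp.support_nodup.map Fin.val_injective
  have hcard : s.card = n' + 2 := by
    rw [hs, List.toFinset_card_of_nodup hnodup, List.length_map,
      SimpleGraph.Walk.length_support, hl]
  have hmem : ∀ x ∈ s, ∃ y : Fin N, y ∈ w.support ∧ y.val = x := by
    intro x hx
    rw [hs, List.mem_toFinset, List.mem_map] at hx
    obtain ⟨y, hy, hxy⟩ := hx
    exact ⟨y, hy, hxy⟩
  have hne : s.Nonempty := by rw [← Finset.card_pos, hcard]; omega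
  set a := s.min' hne with ha
  have hasmem : a ∈ s := s.min'_mem hne
  obtain ⟨z, hz, hza⟩ := hmem a hasmem
  have hzfib := walk_fib_eq w z hz
  have key : s ⊆ Finset.Icc a (a + n') := by
    intro x hx
    obtain ⟨y, hy, hyx⟩ := hmem x hx
    have hyfib := walk_fib_eq w y hy
    rw [Finset.mem_Icc]
    refine ⟨s.min'_le _ hx, ?_⟩
    by_contra hxa
    push_neg at hxa
    have hxa' : a + n' + 1 ≤ x := hxa
    obtain ⟨hz1, hz2⟩ := fib_spec (k := k) hN z
    obtain ⟨hy1, hy2⟩ := fib_spec (k := k) hN y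
    rw [hzfib] at hz1 hz2
    rw [hyfib] at hy1 hy2
    rw [hza] at hz1 hz2
    rw [hyx] at hy1 hy2
    have e1 : (fib N k u + 1) * N = fib N k u * N + N := by ring
    have e2 : (a + n' + 1) * k = a * k + (n' + 1) * k := by ring
    have e3 : k * (n' + 1) = (n' + 1) * k := by ring
    have h4 : (a + n' + 1) * k ≤ x * k := Nat.mul_le_mul_right k hxa'
    linarith
  have : n' + 2 ≤ n' + 1 := by
    calc n' + 2 = s.card := hcard.symm
      _ ≤ (Finset.Icc a (a + n')).card := Finset.card_le_card key
      _ = n' + 1 := by rw [Nat.card_Icc]; omega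
  omega

lemma fiber_card {N k : ℕ} (hN : 0 < N) (hk : 0 < k) {s₀ : ℕ} (hs : 1 ≤ s₀)
    (hsk : s₀ * k ≤ N) {j : ℕ} (hj : j < k) :
    s₀ ≤ (Finset.univ.filter (fun x : Fin N => fib N k x = j)).card := by
  obtain ⟨k', rfl⟩ : ∃ k', k = k' + 1 := ⟨k - 1, by omega⟩
  obtain ⟨s', rfl⟩ : ∃ s', s₀ = s' + 1 := ⟨s₀ - 1, by omega⟩
  set c := (j * N + k') / (k' + 1) with hc
  have h1 : j * N + k' < (c + 1) * (k' + 1) := lt_div_succ_mul _ _ (Nat.succ_pos _)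
  have h2 : c * (k' + 1) ≤ j * N + k' := Nat.div_mul_le_self _ _
  have hclow : j * N ≤ c * (k' + 1) := by
    have e : (c + 1) * (k' + 1) = c * (k' + 1) + (k' + 1) := by ring
    linarith
  have hsk' : s' * (k' + 1) + (k' + 1) ≤ N := by
    have e : (s' + 1) * (k' + 1) = s' * (k' + 1) + (k' + 1) := by ring
    linarith
  have hmem : ∀ y ∈ Finset.Ico c (c + (s' + 1)),
      j * N ≤ y * (k' + 1) ∧ y * (k' + 1) < (j + 1) * N ∧ y < N := by
    intro y hy
    rw [Finset.mem_Ico] at hy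
    have hyc : c ≤ y := hy.1
    have hyc2 : y ≤ c + s' := by omega
    have hylow : j * N ≤ y * (k' + 1) :=
      le_trans hclow (Nat.mul_le_mul_right _ hyc)
    have hyup : y * (k' + 1) < (j + 1) * N := by
      have h4 : y * (k' + 1) ≤ (c + s') * (k' + 1) := Nat.mul_le_mul_right _ hyc2
      have e : (c + s') * (k' + 1) = c * (k' + 1) + s' * (k' + 1) := by ring
      have e2 : (j + 1) * N = j * N + N := by ring
      linarith
    refine ⟨hylow, hyup, ?_⟩
    have hj1 : (j + 1) * N ≤ (k' + 1) * N := Nat.mul_le_mul_right _ (by omega)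
    have : y * (k' + 1) < N * (k' + 1) := by
      have e : (k' + 1) * N = N * (k' + 1) := by ring
      linarith
    exact Nat.lt_of_mul_lt_mul_right this
  calc s' + 1 = (Finset.Ico c (c + (s' + 1))).card := by rw [Nat.card_Ico]; omega
    _ ≤ (Finset.univ.filter (fun x : Fin N => fib N (k' + 1) x = j)).card := by
        apply Finset.card_le_card_of_injOn (fun y => (⟨y % N, Nat.mod_lt _ hN⟩ : Fin N))
        · intro y hy
          obtain ⟨hylow, hyup, hyN⟩ := hmem y hy
          rw [Finset.mem_coe, Finset.mem_filter]
          refine ⟨Finset.mem_univ _, ?_⟩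
          show (y % N) * (k' + 1) / N = j
          rw [Nat.mod_eq_of_lt hyN]
          exact Nat.div_eq_of_lt_le hylow hyup
        · intro y1 hy1 y2 hy2 hee
          have h1 := (hmem y1 hy1).2.2
          have h2 := (hmem y2 hy2).2.2
          have : y1 % N = y2 % N := by
            have := congrArg Fin.val hee
            exact this
          rwa [Nat.mod_eq_of_lt h1, Nat.mod_eq_of_lt h2] at this

lemma cg_no_wheel (N k m : ℕ) (hk : 0 < k) (hB : m ≤ N → k * (N + 1 - m) ≤ N) :
    ¬ HasWheel (cg N k)ᶜ m := by
  rintro ⟨v, u, w, hc, hlen, hadj⟩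
  have hN : 0 < N := v.pos
  have hm3 : 3 ≤ m := hlen ▸ hc.three_le_length
  set s : Finset (Fin N) := w.support.tail.toFinset with hs
  have hcard : s.card = m := by
    rw [hs, List.toFinset_card_of_nodup hc.support_nodup, List.length_tail,
      SimpleGraph.Walk.length_support, hlen]
    omega
  have hdisj : ∀ x ∈ s, fib N k x ≠ fib N k v := by
    intro x hx
    have hx' : x ∈ w.support := List.mem_of_mem_tail (List.mem_toFinset.mp hx)
    have hadj' := hadj x hx'
    rw [SimpleGraph.compl_adj] at hadj'
    obtain ⟨hne, hnadj⟩ := hadj'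
    intro hfi
    exact hnadj (by rw [cg, SimpleGraph.fromRel_adj]; exact ⟨hne, Or.inr hfi⟩)
  set F : Finset (Fin N) :=
    Finset.univ.filter (fun x : Fin N => fib N k x = fib N k v) with hF
  have hdis : Disjoint s F := by
    rw [Finset.disjoint_left]
    intro x hxs hxF
    rw [hF, Finset.mem_filter] at hxF
    exact hdisj x hxs hxF.2
  have hunion : s.card + F.card ≤ N := by
    have h1 : (s ∪ F).card = s.card + F.card := Finset.card_union_of_disjoint hdis
    have h2 : (s ∪ F).card ≤ N := by
      have := Finset.card_le_univ (s ∪ F)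
      simpa using this
    omega
  have hmN : m ≤ N := by
    have := Finset.card_le_univ s
    simp only [Finset.card_univ, Fintype.card_fin] at this
    omega
  have hj : fib N k v < k := by
    have hvk : v.val * k < N * k := (Nat.mul_lt_mul_right hk).mpr v.isLt
    have : v.val * k / N < k := by
      rw [Nat.div_lt_iff_lt_mul hN]
      calc v.val * k < N * k := hvk
        _ = k * N := by ring
    exact this
  have hfc := fiber_card hN hk (s₀ := N + 1 - m) (by omega)
    (by rw [Nat.mul_comm]; exact hB hmN) hj
  have hfc' : N + 1 - m ≤ F.card := hfc
  omega

lemma hasPathOn_mono {V W : Type*} {G : SimpleGraph V} {H : SimpleGraph W}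
    (f : G ↪g H) {p : ℕ} : HasPathOn G p → HasPathOn H p := by
  rintro ⟨u, v, w, hp, hl⟩
  exact ⟨f u, f v, w.map f.toHom,
    SimpleGraph.Walk.map_isPath_of_injective f.injective hp,
    by rw [SimpleGraph.Walk.length_map]; exact hl⟩

lemma hasWheel_mono {V W : Type*} {G : SimpleGraph V} {H : SimpleGraph W}
    (f : G ↪g H) {m : ℕ} : HasWheel G m → HasWheel H m := by
  rintro ⟨v, u, w, hc, hl, hadj⟩
  refine ⟨f v, f u, w.map f.toHom,
    (SimpleGraph.Walk.map_isCycle_iff_of_injective f.injective).mpr hc,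
    by rw [SimpleGraph.Walk.length_map]; exact hl, ?_⟩
  intro x hx
  rw [SimpleGraph.Walk.support_map, List.mem_map] at hx
  obtain ⟨y, hy, rfl⟩ := hx
  exact f.map_adj_iff.mpr (hadj y hy)

lemma comap_compl {V W : Type*} (f : V ↪ W) (G : SimpleGraph W) :
    (G.comap f)ᶜ = (Gᶜ).comap f := by
  ext a b
  simp only [SimpleGraph.compl_adj, SimpleGraph.comap_adj, ne_eq,
    f.injective.ne_iff]

/-- for n ≥ 2 and m ≥ 2n+1 there is a graph on t(n,m) - 1 vertices
with no P_n whose complement has no W_m; consequently R(P_n, W_m) ≥ t(n,m). -/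
theorem stmt14 (n m t : ℕ) (hn : 2 ≤ n) (hm : 2 * n + 1 ≤ m)
    (ht : (t : ℤ) = tval n m) :
    (∃ G : SimpleGraph (Fin (t - 1)), ¬HasPathOn G n ∧ ¬HasWheel (Gᶜ) m) ∧
    ∀ T : ℕ, IsLeast {r : ℕ | ∀ G : SimpleGraph (Fin r),
        HasPathOn G n ∨ HasWheel (Gᶜ) m} T → t ≤ T := by
  -- arithmetic setup
  set α : ℚ := ((m : ℚ) - 1) / ((n : ℚ) - 1) with hαdef
  set β : ℤ := ⌈α⌉ with hβdef
  have hn1 : (0:ℚ) < (n:ℚ) - 1 := by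
    have : (2:ℚ) ≤ (n:ℚ) := by exact_mod_cast hn
    linarith
  have hαmul : α * ((n:ℚ) - 1) = (m:ℚ) - 1 := div_mul_cancel₀ _ (ne_of_gt hn1)
  have h1q : (m:ℚ) - 1 ≤ (β:ℚ) * ((n:ℚ) - 1) := by
    have := Int.le_ceil α
    nlinarith
  have h2q : (β:ℚ) * ((n:ℚ) - 1) < (m:ℚ) - 1 + ((n:ℚ) - 1) := by
    have := Int.ceil_lt_add_one α
    nlinarith
  have h1' : (m:ℤ) - 1 ≤ β * ((n:ℤ) - 1) := by exact_mod_cast h1q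
  have h2' : β * ((n:ℤ) - 1) < (m:ℤ) - 1 + ((n:ℤ) - 1) := by exact_mod_cast h2q
  have hβ3 : 3 ≤ β := by
    have h2α : (2:ℚ) < α := by
      rw [hαdef, lt_div_iff₀ hn1]
      have : (2*n+1:ℚ) ≤ (m:ℚ) := by exact_mod_cast hm
      linarith
    have := Int.lt_ceil.mpr (by push_cast; linarith : ((2:ℤ):ℚ) < α)
    omega
  set b := β.toNat with hbdef
  have hbβ : (b:ℤ) = β := Int.toNat_of_nonneg (by omega)
  have hb3 : 3 ≤ b := by omega
  have hβm : β ≤ (m:ℤ) - 1 := by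
    have hαm : α ≤ ((m:ℤ) - 1 : ℤ) := by
      push_cast
      rw [hαdef]
      apply div_le_self
      · have : (2*n+1:ℚ) ≤ (m:ℚ) := by exact_mod_cast hm
        linarith
      · have : (2:ℚ) ≤ (n:ℚ) := by exact_mod_cast hn
        linarith
    exact Int.ceil_le.mpr hαm
  -- key inequality extraction per case
  have key : ∃ k : ℕ, 0 < k ∧ t - 1 ≤ k * (n - 1) ∧
      (m ≤ t - 1 → k * (t - 1 + 1 - m) ≤ t - 1) := by
    simp only [tval] at ht
    rw [← hαdef, ← hβdef] at ht
    split_ifs at ht with hcase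
    · -- t = (n-1)β + 1
      have ht' : (t:ℤ) = ((n:ℤ) - 1) * (b:ℤ) + 1 := by rw [hbβ]; exact ht
      have ht1 : 1 ≤ t := by
        have : 0 ≤ ((n:ℤ) - 1) * (b:ℤ) :=
          mul_nonneg (by omega) (by positivity)
        omega
      have hNb : t - 1 = b * (n - 1) := by
        zify [ht1, show 1 ≤ n by omega]
        rw [hbβ]
        linarith [mul_comm β ((n:ℤ) - 1)]
      refine ⟨b, by omega, le_of_eq hNb, ?_⟩
      intro hmt
      have htub : t ≤ m + n - 2 := by
        have : (t:ℤ) ≤ (m:ℤ) + (n:ℤ) - 2 := by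
          rw [ht']
          linarith [mul_comm β ((n:ℤ) - 1), hbβ,
            mul_comm ((n:ℤ) - 1) (b:ℤ)]
        omega
      have h3 : t - 1 + 1 - m ≤ n - 1 := by omega
      calc b * (t - 1 + 1 - m) ≤ b * (n - 1) := Nat.mul_le_mul_left b h3
        _ = t - 1 := hNb.symm
    · -- t = (m-1)/β + m
      have hm1 : ((m:ℤ) - 1) = ((m - 1 : ℕ) : ℤ) := by omega
      have hdiv : ((m:ℤ) - 1) / β = (((m - 1) / b : ℕ) : ℤ) := by
        rw [hm1, ← hbβ, Int.natCast_div]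
      set Q := (m - 1) / b with hQ
      have htn : t = Q + m := by
        have : (t:ℤ) = (Q:ℤ) + (m:ℤ) := by rw [ht, hdiv]
        exact_mod_cast this
      have hbQ : Q * b ≤ m - 1 := Nat.div_mul_le_self _ _
      have hQn : Q ≤ n - 1 := by
        have hb0 : 0 < b := by omega
        apply Nat.le_of_mul_le_mul_right _ hb0
        calc Q * b ≤ m - 1 := hbQ
          _ ≤ b * (n - 1) := by
              zify [show 1 ≤ m by omega, show 1 ≤ n by omega]
              rw [hbβ]; linarith
          _ = (n - 1) * b := by ring
      refine ⟨b + 1, by omega, ?_, ?_⟩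
      · -- Q + m - 1 ≤ (b+1)*(n-1)
        have e : (b + 1) * (n - 1) = b * (n - 1) + (n - 1) := by ring
        have h4 : m - 1 ≤ b * (n - 1) := by
          zify [show 1 ≤ m by omega, show 1 ≤ n by omega]
          rw [hbβ]; linarith
        omega
      · intro hmt
        have h5 : t - 1 + 1 - m = Q := by omega
        rw [h5]
        have e : (b + 1) * Q = Q * b + Q := by ring
        omega
  obtain ⟨k, hk, hA, hB⟩ := key
  have hG : ∃ G : SimpleGraph (Fin (t - 1)), ¬HasPathOn G n ∧ ¬HasWheel (Gᶜ) m :=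
    ⟨cg (t - 1) k, cg_no_path _ _ _ hn hA, cg_no_wheel _ _ _ hk hB⟩
  refine ⟨hG, ?_⟩
  rintro T ⟨hTmem, _⟩
  by_contra hTt
  push_neg at hTt
  have hT1 : T ≤ t - 1 := by omega
  obtain ⟨G, hG1, hG2⟩ := hG
  set f : Fin T ↪ Fin (t - 1) := Fin.castLEEmb hT1 with hf
  rcases hTmem (G.comap f) with hp | hw
  · exact hG1 (hasPathOn_mono (SimpleGraph.Embedding.comap f G) hp)
  · rw [comap_compl] at hw
    exact hG2 (hasWheel_mono (SimpleGraph.Embedding.comap f Gᶜ) hw)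
end
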